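/- arXiv:1709.05846 — 7 statements merged into one kernel-verified Lean document; each statement's English description precedes it below -/
import Mathlib

section
/- Let p ≥ 1 and let Cl_p be the real Clifford algebra of the quadratic form Q(v) = -‖v‖² on EuclideanSpace ℝ (Fin p) with embedding ι. For every x ∈ EuclideanSpace ℝ (Fin p) with x ≠ 0, the Dirac derivative of the function v ↦ ‖v‖⁻¹ • ι(v) at x equals ((1 - p)/‖x‖) • 1; that is, Σ_{j=1}^{p} ι(e_j) * ∂_{x_j}(v ↦ ‖v‖⁻¹ • ι(v))(x) = ((1 - p)/‖x‖) • 1 in Cl_p. -/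
open MeasureTheory Metric
open scoped RealInnerProductSpace

noncomputable section

/-- Weak (Pettis-style) directional derivative: `f` has derivative `d` at `a` in direction `v`
iff every real-linear functional of `f` along the line `a + t • v` has derivative `ℓ d` at `t = 0`.
For finite-dimensional codomains this coincides with the usual directional derivative. -/
def HasPDeriv {E A : Type*} [NormedAddCommGroup E] [NormedSpace ℝ E]
    [AddCommGroup A] [Module ℝ A] (f : E → A) (a v : E) (d : A) : Prop :=
  ∀ ℓ : A →ₗ[ℝ] ℝ, HasDerivAt (fun t : ℝ => ℓ (f (a + t • v))) (ℓ d) 0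

/-- The Dirac derivative of `f` at `a` equals `D`: the partial derivatives of `f` at `a`
in the standard coordinate directions exist and `∑ⱼ ι(eⱼ) * ∂ⱼf(a) = D`. -/
def DiracDerivEq {m : ℕ} {Q : QuadraticForm ℝ (EuclideanSpace ℝ (Fin m))}
    (f : EuclideanSpace ℝ (Fin m) → CliffordAlgebra Q)
    (a : EuclideanSpace ℝ (Fin m)) (D : CliffordAlgebra Q) : Prop :=
  ∃ d : Fin m → CliffordAlgebra Q,
    (∀ j, HasPDeriv f a (EuclideanSpace.single j 1) (d j)) ∧
    ∑ j, CliffordAlgebra.ι Q (EuclideanSpace.single j 1) * d j = D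

lemma aux_pderiv {p : ℕ} (Q : QuadraticForm ℝ (EuclideanSpace ℝ (Fin p)))
    (x v : EuclideanSpace ℝ (Fin p)) (hx : x ≠ 0) :
    HasPDeriv (fun y => ‖y‖⁻¹ • CliffordAlgebra.ι Q y) x v
      (‖x‖⁻¹ • CliffordAlgebra.ι Q v - (⟪x, v⟫ / ‖x‖ ^ 3) • CliffordAlgebra.ι Q x) := by
  intro ℓ
  have hxn : ‖x‖ ≠ 0 := norm_ne_zero_iff.mpr hx
  set c := ℓ (CliffordAlgebra.ι Q x) with hc
  set b := ℓ (CliffordAlgebra.ι Q v) with hb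
  have hsq : ∀ t : ℝ, ‖x + t • v‖
      = Real.sqrt (‖x‖ ^ 2 + t * (2 * ⟪x, v⟫) + t ^ 2 * ‖v‖ ^ 2) := by
    intro t
    rw [← Real.sqrt_sq (norm_nonneg (x + t • v))]
    congr 1
    rw [← real_inner_self_eq_norm_sq, ← real_inner_self_eq_norm_sq,
      ← real_inner_self_eq_norm_sq]
    simp only [real_inner_add_add_self, real_inner_smul_left, real_inner_smul_right]
    ring
  have h1 : HasDerivAt
      (fun t : ℝ => ‖x‖ ^ 2 + t * (2 * ⟪x, v⟫) + t ^ 2 * ‖v‖ ^ 2) (2 * ⟪x, v⟫) 0 := by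
    have := (((hasDerivAt_id (0 : ℝ)).mul_const (2 * ⟪x, v⟫)).const_add (‖x‖ ^ 2)).add
      ((hasDerivAt_pow 2 (0 : ℝ)).mul_const (‖v‖ ^ 2))
    simpa [Pi.add_def] using this
  have hf0 : (‖x‖ ^ 2 + (0:ℝ) * (2 * ⟪x, v⟫) + (0:ℝ) ^ 2 * ‖v‖ ^ 2) = ‖x‖ ^ 2 := by ring
  have h2 := (h1.sqrt (by rw [hf0]; positivity)).inv (by
    rw [hf0, Real.sqrt_sq (norm_nonneg x)]; exact hxn)
  rw [hf0, Real.sqrt_sq (norm_nonneg x)] at h2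
  have h3 : HasDerivAt (fun t : ℝ => c + t * b) b 0 := by
    simpa using ((hasDerivAt_id (0 : ℝ)).mul_const b).const_add c
  have h4 := h2.mul h3
  simp only [Pi.inv_apply, hf0, Real.sqrt_sq (norm_nonneg x)] at h4
  have key : ∀ {f g : ℝ → ℝ} {a b : ℝ}, f = g → a = b → HasDerivAt g b 0 → HasDerivAt f a 0 := by
    rintro _ _ _ _ rfl rfl h; exact h
  refine key ?_ ?_ h4
  · funext t
    have hiota : CliffordAlgebra.ι Q (x + t • v)
        = CliffordAlgebra.ι Q x + t • CliffordAlgebra.ι Q v := by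
      rw [map_add, LinearMap.map_smul]
    show ℓ (‖x + t • v‖⁻¹ • CliffordAlgebra.ι Q (x + t • v)) = _
    rw [hiota, ℓ.map_smul, hsq t, map_add ℓ, ℓ.map_smul, ← hc, ← hb, smul_eq_mul, smul_eq_mul]
    rfl
  · rw [map_sub ℓ, ℓ.map_smul, ℓ.map_smul, ← hc, ← hb, smul_eq_mul, smul_eq_mul]
    field_simp
    ring

lemma aux_sum_single {p : ℕ} (x : EuclideanSpace ℝ (Fin p)) :
    ∑ j, x j • EuclideanSpace.single j (1 : ℝ) = x := by
  have := (EuclideanSpace.basisFun (Fin p) ℝ).sum_repr x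
  simpa [EuclideanSpace.basisFun_apply, EuclideanSpace.basisFun_repr] using this

theorem stmt0 (p : ℕ) (hp : 1 ≤ p)
    (Q : QuadraticForm ℝ (EuclideanSpace ℝ (Fin p)))
    (hQ : ∀ v, Q v = -‖v‖ ^ 2)
    (x : EuclideanSpace ℝ (Fin p)) (hx : x ≠ 0) :
    DiracDerivEq (fun v => ‖v‖⁻¹ • CliffordAlgebra.ι Q v) x
      (((1 - (p : ℝ)) / ‖x‖) • 1) := by
  have hxn : ‖x‖ ≠ 0 := norm_ne_zero_iff.mpr hx
  refine ⟨fun j => ‖x‖⁻¹ • CliffordAlgebra.ι Q (EuclideanSpace.single j 1)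
      - (x j / ‖x‖ ^ 3) • CliffordAlgebra.ι Q x, fun j => ?_, ?_⟩
  · have := aux_pderiv Q x (EuclideanSpace.single j 1) hx
    have hinner : ⟪x, EuclideanSpace.single j (1:ℝ)⟫ = x j := by
      simp [EuclideanSpace.inner_single_right]
    rwa [hinner] at this
  · have hsq : ∀ j : Fin p, CliffordAlgebra.ι Q (EuclideanSpace.single j (1:ℝ))
        * CliffordAlgebra.ι Q (EuclideanSpace.single j 1) = (-1 : ℝ) • 1 := by
      intro j
      rw [CliffordAlgebra.ι_sq_scalar, hQ, EuclideanSpace.norm_single,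
        Algebra.algebraMap_eq_smul_one]
      norm_num
    have hxx : CliffordAlgebra.ι Q x * CliffordAlgebra.ι Q x = (-‖x‖ ^ 2 : ℝ) • 1 := by
      rw [CliffordAlgebra.ι_sq_scalar, hQ, Algebra.algebraMap_eq_smul_one]
    calc ∑ j, CliffordAlgebra.ι Q (EuclideanSpace.single j 1) *
          (‖x‖⁻¹ • CliffordAlgebra.ι Q (EuclideanSpace.single j 1)
            - (x j / ‖x‖ ^ 3) • CliffordAlgebra.ι Q x)
        = ∑ j, (‖x‖⁻¹ • ((-1:ℝ) • (1 : CliffordAlgebra Q))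
            - (‖x‖ ^ 3)⁻¹ • ((x j • CliffordAlgebra.ι Q (EuclideanSpace.single j 1))
              * CliffordAlgebra.ι Q x)) := by
          refine Finset.sum_congr rfl fun j _ => ?_
          rw [mul_sub, mul_smul_comm, mul_smul_comm, hsq j, div_eq_inv_mul, mul_smul,
            smul_mul_assoc]
      _ = (p : ℝ) • (‖x‖⁻¹ • ((-1:ℝ) • (1 : CliffordAlgebra Q)))
            - (‖x‖ ^ 3)⁻¹ • ((∑ j, x j • CliffordAlgebra.ι Q (EuclideanSpace.single j 1))
              * CliffordAlgebra.ι Q x) := by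
          rw [Finset.sum_sub_distrib, Finset.sum_const, Finset.card_univ, Fintype.card_fin,
            ← Finset.smul_sum, ← Finset.sum_mul]
          simp [← Nat.cast_smul_eq_nsmul ℝ]
      _ = ((1 - (p : ℝ)) / ‖x‖) • 1 := by
          have : ∑ j, x j • CliffordAlgebra.ι Q (EuclideanSpace.single j (1:ℝ))
              = CliffordAlgebra.ι Q x := by
            calc ∑ j, x j • CliffordAlgebra.ι Q (EuclideanSpace.single j (1:ℝ))
                = ∑ j, CliffordAlgebra.ι Q (x j • EuclideanSpace.single j (1:ℝ)) :=
                  Finset.sum_congr rfl fun j _ => (LinearMap.map_smul _ _ _).symm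
              _ = CliffordAlgebra.ι Q (∑ j, x j • EuclideanSpace.single j (1:ℝ)) :=
                  (map_sum _ _ _).symm
              _ = CliffordAlgebra.ι Q x := by rw [aux_sum_single]
          rw [this, hxx]
          rw [smul_smul, smul_smul, smul_smul, ← sub_smul]
          congr 1
          field_simp
          ring
end
end

section
/- Let p ≥ 1, let Cl_p be the real Clifford algebra of Q(v) = -‖v‖² on EuclideanSpace ℝ (Fin p) with embedding ι, and let j ≥ 1 be a natural number. Then for every x ∈ EuclideanSpace ℝ (Fin p), the Dirac derivative of the function v ↦ (ι(v))^j at x equals β_j • (ι(x))^{j-1}, where β_j = -j if j is even and β_j = -(j + p - 1) if j is odd. -/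
open MeasureTheory Metric
open scoped RealInnerProductSpace

noncomputable section

lemma aux_deriv {A : Type*} [Ring A] [Algebra ℝ A] (a b : A) :
    ∀ (n : ℕ) (ℓ : A →ₗ[ℝ] ℝ),
      HasDerivAt (fun t : ℝ => ℓ ((a + t • b) ^ n))
        (ℓ (∑ i ∈ Finset.range n, a ^ i * b * a ^ (n - 1 - i))) 0 := by
  intro n
  induction n with
  | zero =>
      intro ℓ
      simpa using (hasDerivAt_const (0:ℝ) (ℓ 1))
  | succ n ih =>
      intro ℓ
      have h1 := ih (ℓ.comp (LinearMap.mulRight ℝ a))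
      have h2 := ih (ℓ.comp (LinearMap.mulRight ℝ b))
      have h3 : HasDerivAt
          (fun t : ℝ => t * (ℓ.comp (LinearMap.mulRight ℝ b)) ((a + t • b) ^ n))
          (ℓ (a ^ n * b)) 0 := by
        have := (hasDerivAt_id' (0:ℝ)).mul h2
        exact this.congr_deriv (by simp)
      have h := h1.add h3
      have hfun : (fun t : ℝ => ℓ ((a + t • b) ^ (n + 1))) =
          (fun t : ℝ => (ℓ.comp (LinearMap.mulRight ℝ a)) ((a + t • b) ^ n)
            + t * (ℓ.comp (LinearMap.mulRight ℝ b)) ((a + t • b) ^ n)) := by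
        funext t
        simp only [LinearMap.comp_apply, LinearMap.mulRight_apply]
        rw [pow_succ, mul_add, mul_smul_comm, map_add, ℓ.map_smul, smul_eq_mul]
      have hder : ℓ (∑ i ∈ Finset.range (n + 1), a ^ i * b * a ^ (n + 1 - 1 - i)) =
          (ℓ.comp (LinearMap.mulRight ℝ a))
            (∑ i ∈ Finset.range n, a ^ i * b * a ^ (n - 1 - i)) + ℓ (a ^ n * b) := by
        simp only [LinearMap.comp_apply, LinearMap.mulRight_apply]
        rw [← map_add]
        congr 1
        rw [Finset.sum_mul, Finset.sum_range_succ]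
        congr 1
        · apply Finset.sum_congr rfl
          intro i hi
          rw [Finset.mem_range] at hi
          have hexp : n + 1 - 1 - i = n - 1 - i + 1 := by omega
          rw [hexp, pow_succ, ← mul_assoc]
        · simp
      rw [hfun, hder]
      exact h

theorem stmt1 (p : ℕ) (hp : 1 ≤ p)
    (Q : QuadraticForm ℝ (EuclideanSpace ℝ (Fin p)))
    (hQ : ∀ v, Q v = -‖v‖ ^ 2)
    (j : ℕ) (hj : 1 ≤ j)
    (x : EuclideanSpace ℝ (Fin p)) :
    DiracDerivEq (fun v => CliffordAlgebra.ι Q v ^ j) x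
      ((if Even j then -(j : ℝ) else -((j : ℝ) + p - 1)) •
        CliffordAlgebra.ι Q x ^ (j - 1)) := by
  classical
  set ι := CliffordAlgebra.ι Q with hι
  set a : CliffordAlgebra Q := ι x with ha
  set e : Fin p → EuclideanSpace ℝ (Fin p) := fun k => EuclideanSpace.single k 1 with he
  set u : Fin p → CliffordAlgebra Q := fun k => ι (e k) with hu
  -- basic facts
  have hQe : ∀ k, Q (e k) = -1 := by
    intro k
    rw [hQ, he]
    simp [EuclideanSpace.norm_single]
  have hpolar : ∀ k, QuadraticMap.polar Q (e k) x = -2 * x k := by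
    intro k
    have hinner : ⟪e k, x⟫ = x k := by
      rw [he]
      simp [EuclideanSpace.inner_single_left]
    rw [QuadraticMap.polar, hQ, hQ, hQ, norm_add_sq_real, hinner]
    ring
  have hx_sum : ∑ k, x k • e k = x := by
    ext l
    rw [he]
    simp only [PiLp.smul_apply, EuclideanSpace.single_apply, smul_eq_mul]
    rw [WithLp.ofLp_sum, Finset.sum_apply]
    simp [EuclideanSpace.single_apply]
  have husq : ∀ k, u k * u k = algebraMap ℝ _ (-1 : ℝ) := by
    intro k
    rw [hu, CliffordAlgebra.ι_sq_scalar, hQe]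
  have key1 : ∑ k, u k * a * u k = ((p : ℝ) - 2) • a := by
    have hterm : ∀ k, u k * a * u k = (-2 * x k) • u k + a := by
      intro k
      have hsw : u k * a = algebraMap ℝ _ (QuadraticMap.polar Q (e k) x) - a * u k := by
        rw [eq_sub_iff_add_eq]
        exact CliffordAlgebra.ι_mul_ι_add_swap (e k) x
      rw [hsw, sub_mul, mul_assoc, husq, hpolar, Algebra.smul_def, _root_.map_neg,
        _root_.map_one, mul_neg_one, sub_neg_eq_add]
    rw [Finset.sum_congr rfl (fun k _ => hterm k), Finset.sum_add_distrib,
      Finset.sum_const, Finset.card_univ, Fintype.card_fin]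
    have : ∑ k, (-2 * x k) • u k = (-2 : ℝ) • a := by
      rw [ha, hu]
      calc ∑ k, (-2 * x k) • ι (e k) = (-2 : ℝ) • ∑ k, ι (x k • e k) := by
            rw [Finset.smul_sum]
            apply Finset.sum_congr rfl
            intro k _
            rw [ι.map_smul, smul_smul]
        _ = (-2 : ℝ) • ι x := by rw [← map_sum, hx_sum]
    rw [this, ← Nat.cast_smul_eq_nsmul ℝ]
    module
  have keyeven : ∀ m : ℕ, a ^ (2 * m) = algebraMap ℝ _ ((Q x) ^ m) := by
    intro m
    induction m with
    | zero => simp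
    | succ m ih =>
        have h2 : 2 * (m + 1) = 2 * m + 2 := by ring
        have hsq : a * a = algebraMap ℝ (CliffordAlgebra Q) (Q x) :=
          CliffordAlgebra.ι_sq_scalar Q x
        rw [h2, pow_add, ih, pow_two, hsq, ← _root_.map_mul, ← pow_succ]
  have key : ∀ i : ℕ, ∑ k, u k * a ^ i * u k =
      (if Even i then -(p : ℝ) else (p : ℝ) - 2) • a ^ i := by
    intro i
    rcases Nat.even_or_odd i with ⟨m, hm⟩ | ⟨m, hm⟩
    · have h2m : i = 2 * m := by omega
      subst h2m
      rw [if_pos (by exact ⟨m, by ring⟩), keyeven]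
      have hterm : ∀ k, u k * algebraMap ℝ (CliffordAlgebra Q) ((Q x) ^ m) * u k =
          algebraMap ℝ _ (-(Q x) ^ m) := by
        intro k
        rw [show u k * algebraMap ℝ (CliffordAlgebra Q) ((Q x) ^ m)
            = algebraMap ℝ (CliffordAlgebra Q) ((Q x) ^ m) * u k from
          (Algebra.commutes _ _).symm, mul_assoc, husq, ← map_mul]
        congr 1
        ring
      rw [Finset.sum_congr rfl (fun k _ => hterm k), Finset.sum_const, Finset.card_univ,
        Fintype.card_fin, ← Nat.cast_smul_eq_nsmul ℝ, map_neg]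
      module
    · have h2m : i = 2 * m + 1 := hm
      subst h2m
      have hodd : a ^ (2 * m + 1) = (Q x ^ m) • a := by
        rw [pow_succ, keyeven, Algebra.smul_def]
      rw [if_neg (by simp [Nat.even_add_one, parity_simps]), hodd]
      calc ∑ k, u k * Q x ^ m • a * u k = Q x ^ m • ∑ k, u k * a * u k := by
            rw [Finset.smul_sum]
            exact Finset.sum_congr rfl fun k _ => by rw [mul_smul_comm, smul_mul_assoc]
        _ = ((p : ℝ) - 2) • Q x ^ m • a := by rw [key1, smul_comm]
  -- the scalar sum
  have hscalar : ∀ n : ℕ, ∑ i ∈ Finset.range n, (if Even i then -(p : ℝ) else (p : ℝ) - 2)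
      = if Even n then -(n : ℝ) else -((n : ℝ) + p - 1) := by
    intro n
    induction n with
    | zero => simp
    | succ n ih =>
        rw [Finset.sum_range_succ, ih]
        by_cases hn : Even n
        · rw [if_pos hn, if_pos hn, if_neg (by simp [Nat.even_add_one, hn])]
          push_cast
          ring
        · rw [if_neg hn, if_neg hn, if_pos (by simp [Nat.even_add_one, hn])]
          push_cast
          ring
  refine ⟨fun k => ∑ i ∈ Finset.range j, a ^ i * u k * a ^ (j - 1 - i), ?_, ?_⟩
  · intro k ℓ
    have harg : ∀ t : ℝ, CliffordAlgebra.ι Q (x + t • EuclideanSpace.single k 1)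
        = a + t • u k := by
      intro t
      rw [_root_.map_add, LinearMap.map_smul]
    simpa only [hι, harg] using aux_deriv a (u k) j ℓ
  · calc ∑ k, u k * ∑ i ∈ Finset.range j, a ^ i * u k * a ^ (j - 1 - i)
        = ∑ i ∈ Finset.range j, (∑ k, u k * a ^ i * u k) * a ^ (j - 1 - i) := by
          rw [Finset.sum_congr rfl fun k _ => Finset.mul_sum _ _ _, Finset.sum_comm]
          exact Finset.sum_congr rfl fun i _ => by
            rw [Finset.sum_mul]
            exact Finset.sum_congr rfl fun k _ => by rw [← mul_assoc, ← mul_assoc]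
      _ = ∑ i ∈ Finset.range j, (if Even i then -(p : ℝ) else (p : ℝ) - 2) • a ^ (j - 1) := by
          apply Finset.sum_congr rfl
          intro i hi
          rw [Finset.mem_range] at hi
          rw [key i, smul_mul_assoc, ← pow_add]
          congr 2
          omega
      _ = (if Even j then -(j : ℝ) else -((j : ℝ) + p - 1)) • a ^ (j - 1) := by
          rw [← Finset.sum_smul, hscalar]
end
end

section
/- Let p, q ≥ 1 and let Cl_{p+q} be the real Clifford algebra of Q(v) = -‖v‖² on EuclideanSpace ℝ (Fin (p+q)) with embedding ι. Write points of ℝ^{p+q} as (x,y) with x the first p coordinates and y the last q coordinates, and let 𝒜 be the subalgebra of Cl_{p+q} generated by the images ι(ε_1),…,ι(ε_q) of the last q standard basis vectors. Let A, B : (0,∞) × EuclideanSpace ℝ (Fin q) → Cl_{p+q} be differentiable functions taking values in 𝒜, and define f on {(x,y) : x ≠ 0} by f(x,y) = A(‖x‖, y) + ‖x‖⁻¹ • (ι(x̃) * B(‖x‖, y)), where x̃ is x regarded as a vector of ℝ^{p+q} supported in the first p coordinates. Then f is monogenic on {x ≠ 0} (i.e. (∂_x + ∂_y)f = 0 there)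 if and only if for all r > 0 and all y: ∂_y A(r,y) - ∂_r B(r,y) - ((p-1)/r) • B(r,y) = 0 and ∂_y B(r,y) - ∂_r A(r,y) = 0, where ∂_r is the partial derivative in the first (radial) variable and ∂_y g = Σ_{j=1}^q ι(ε_j) * (∂_{y_j} g). -/
open MeasureTheory Metric
open scoped RealInnerProductSpace

noncomputable section

variable (p q : ℕ) in
/-- The first `p` coordinates of a point of `ℝ^{p+q}`. -/
def xpart (z : EuclideanSpace ℝ (Fin (p + q))) : EuclideanSpace ℝ (Fin p) :=
  (WithLp.equiv 2 (Fin p → ℝ)).symm fun i => z (Fin.castAdd q i)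

variable (p q : ℕ) in
/-- The last `q` coordinates of a point of `ℝ^{p+q}`. -/
def ypart (z : EuclideanSpace ℝ (Fin (p + q))) : EuclideanSpace ℝ (Fin q) :=
  (WithLp.equiv 2 (Fin q → ℝ)).symm fun i => z (Fin.natAdd p i)

variable (p q : ℕ) in
/-- A vector of `ℝ^p` regarded as a vector of `ℝ^{p+q}` supported in the first `p` coordinates. -/
def embX (x : EuclideanSpace ℝ (Fin p)) : EuclideanSpace ℝ (Fin (p + q)) :=
  (WithLp.equiv 2 (Fin (p + q) → ℝ)).symm (Fin.addCases (fun i => x i) fun _ => 0)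

variable (p q : ℕ) in
/-- A vector of `ℝ^q` regarded as a vector of `ℝ^{p+q}` supported in the last `q` coordinates. -/
def embY (y : EuclideanSpace ℝ (Fin q)) : EuclideanSpace ℝ (Fin (p + q)) :=
  (WithLp.equiv 2 (Fin (p + q) → ℝ)).symm (Fin.addCases (fun _ => 0) fun i => y i)

section Coord

variable (p q : ℕ)

lemma castAdd_ne_natAdd' (i : Fin p) (j : Fin q) : Fin.castAdd q i ≠ Fin.natAdd p j := by
  intro h
  have h2 := congrArg Fin.val h
  have := i.isLt
  simp only [Fin.coe_castAdd, Fin.coe_natAdd] at h2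
  omega

lemma natAdd_inj' {j j' : Fin q} : Fin.natAdd p j = Fin.natAdd p j' ↔ j = j' := by
  simp only [Fin.ext_iff, Fin.coe_natAdd]
  omega

@[simp] lemma xpart_apply (z : EuclideanSpace ℝ (Fin (p + q))) (i : Fin p) :
    xpart p q z i = z (Fin.castAdd q i) := rfl

@[simp] lemma ypart_apply (z : EuclideanSpace ℝ (Fin (p + q))) (i : Fin q) :
    ypart p q z i = z (Fin.natAdd p i) := rfl

@[simp] lemma embX_castAdd (x : EuclideanSpace ℝ (Fin p)) (i : Fin p) :
    embX p q x (Fin.castAdd q i) = x i := by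
  rw [embX, WithLp.equiv_symm_apply, PiLp.toLp_apply]; exact Fin.addCases_left i

@[simp] lemma embX_natAdd (x : EuclideanSpace ℝ (Fin p)) (j : Fin q) :
    embX p q x (Fin.natAdd p j) = 0 := by
  rw [embX, WithLp.equiv_symm_apply, PiLp.toLp_apply]; exact Fin.addCases_right j

@[simp] lemma embY_castAdd (y : EuclideanSpace ℝ (Fin q)) (i : Fin p) :
    embY p q y (Fin.castAdd q i) = 0 := by
  rw [embY, WithLp.equiv_symm_apply, PiLp.toLp_apply]; exact Fin.addCases_left i

@[simp] lemma embY_natAdd (y : EuclideanSpace ℝ (Fin q)) (j : Fin q) :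
    embY p q y (Fin.natAdd p j) = y j := by
  rw [embY, WithLp.equiv_symm_apply, PiLp.toLp_apply]; exact Fin.addCases_right j

lemma xpart_linear (z w : EuclideanSpace ℝ (Fin (p + q))) (c : ℝ) :
    xpart p q (z + c • w) = xpart p q z + c • xpart p q w := rfl

lemma ypart_linear (z w : EuclideanSpace ℝ (Fin (p + q))) (c : ℝ) :
    ypart p q (z + c • w) = ypart p q z + c • ypart p q w := rfl

lemma embX_add (x x' : EuclideanSpace ℝ (Fin p)) :
    embX p q (x + x') = embX p q x + embX p q x' := by
  ext k
  induction k using Fin.addCases with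
  | left i => simp
  | right j => simp

lemma embX_smul (c : ℝ) (x : EuclideanSpace ℝ (Fin p)) :
    embX p q (c • x) = c • embX p q x := by
  ext k
  induction k using Fin.addCases with
  | left i => simp
  | right j => simp

@[simp] lemma embX_zero : embX p q 0 = 0 := by
  ext k
  induction k using Fin.addCases with
  | left i => simp
  | right j => simp

@[simp] lemma xpart_embX (x : EuclideanSpace ℝ (Fin p)) : xpart p q (embX p q x) = x := by
  ext i; simp

@[simp] lemma ypart_embX (x : EuclideanSpace ℝ (Fin p)) : ypart p q (embX p q x) = 0 := by
  ext j; simp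

@[simp] lemma xpart_embY (y : EuclideanSpace ℝ (Fin q)) : xpart p q (embY p q y) = 0 := by
  ext i; simp

@[simp] lemma ypart_embY (y : EuclideanSpace ℝ (Fin q)) : ypart p q (embY p q y) = y := by
  ext j; simp

lemma embX_xpart_add_embY_ypart (z : EuclideanSpace ℝ (Fin (p + q))) :
    embX p q (xpart p q z) + embY p q (ypart p q z) = z := by
  ext k
  induction k using Fin.addCases with
  | left i => simp
  | right j => simp

lemma inner_embX_embX (x x' : EuclideanSpace ℝ (Fin p)) :
    ⟪embX p q x, embX p q x'⟫ = ⟪x, x'⟫ := by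
  simp only [PiLp.inner_apply, RCLike.inner_apply, starRingEnd_apply, star_trivial]
  rw [Fin.sum_univ_add]
  simp

lemma inner_embX_embY (x : EuclideanSpace ℝ (Fin p)) (y : EuclideanSpace ℝ (Fin q)) :
    ⟪embX p q x, embY p q y⟫ = 0 := by
  simp only [PiLp.inner_apply, RCLike.inner_apply, starRingEnd_apply, star_trivial]
  rw [Fin.sum_univ_add]
  simp

lemma inner_embY_embY (y y' : EuclideanSpace ℝ (Fin q)) :
    ⟪embY p q y, embY p q y'⟫ = ⟪y, y'⟫ := by
  simp only [PiLp.inner_apply, RCLike.inner_apply, starRingEnd_apply, star_trivial]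
  rw [Fin.sum_univ_add]
  simp

lemma norm_embX (x : EuclideanSpace ℝ (Fin p)) : ‖embX p q x‖ = ‖x‖ := by
  rw [← Real.sqrt_sq (norm_nonneg (embX p q x)), ← Real.sqrt_sq (norm_nonneg x),
    ← real_inner_self_eq_norm_sq, ← real_inner_self_eq_norm_sq, inner_embX_embX]

lemma norm_embY (y : EuclideanSpace ℝ (Fin q)) : ‖embY p q y‖ = ‖y‖ := by
  rw [← Real.sqrt_sq (norm_nonneg (embY p q y)), ← Real.sqrt_sq (norm_nonneg y),
    ← real_inner_self_eq_norm_sq, ← real_inner_self_eq_norm_sq, inner_embY_embY]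

@[simp] lemma xpart_single_castAdd (i : Fin p) (c : ℝ) :
    xpart p q (EuclideanSpace.single (Fin.castAdd q i) c) = EuclideanSpace.single i c := by
  ext i'
  simp [EuclideanSpace.single_apply, Fin.castAdd_injective p q |>.eq_iff]

@[simp] lemma ypart_single_castAdd (i : Fin p) (c : ℝ) :
    ypart p q (EuclideanSpace.single (Fin.castAdd q i) c) = 0 := by
  ext j
  simp only [ypart_apply, EuclideanSpace.single_apply, PiLp.zero_apply]
  rw [if_neg (by exact (castAdd_ne_natAdd' p q i j).symm)]

@[simp] lemma xpart_single_natAdd (j : Fin q) (c : ℝ) :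
    xpart p q (EuclideanSpace.single (Fin.natAdd p j) c) = 0 := by
  ext i
  simp only [xpart_apply, EuclideanSpace.single_apply, PiLp.zero_apply]
  rw [if_neg (castAdd_ne_natAdd' p q i j)]

@[simp] lemma ypart_single_natAdd (j : Fin q) (c : ℝ) :
    ypart p q (EuclideanSpace.single (Fin.natAdd p j) c) = EuclideanSpace.single j c := by
  ext j'
  simp [EuclideanSpace.single_apply, natAdd_inj' p q]

lemma embX_single (i : Fin p) (c : ℝ) :
    embX p q (EuclideanSpace.single i c) = EuclideanSpace.single (Fin.castAdd q i) c := by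
  ext k
  induction k using Fin.addCases with
  | left i' => simp [EuclideanSpace.single_apply, Fin.castAdd_injective p q |>.eq_iff]
  | right j =>
      simp only [embX_natAdd, EuclideanSpace.single_apply]
      rw [if_neg (by exact (castAdd_ne_natAdd' p q i j).symm)]

lemma embY_single (j : Fin q) (c : ℝ) :
    embY p q (EuclideanSpace.single j c) = EuclideanSpace.single (Fin.natAdd p j) c := by
  ext k
  induction k using Fin.addCases with
  | left i =>
      simp only [embY_castAdd, EuclideanSpace.single_apply]
      rw [if_neg (castAdd_ne_natAdd' p q i j)]
  | right j' => simp [EuclideanSpace.single_apply, natAdd_inj' p q]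

end Coord

section Toolkit

variable {E A : Type*} [NormedAddCommGroup E] [NormedSpace ℝ E]
  [AddCommGroup A] [Module ℝ A]

lemma HasPDeriv.unique' {f : E → A} {a v : E} {d₁ d₂ : A}
    (h₁ : HasPDeriv f a v d₁) (h₂ : HasPDeriv f a v d₂) : d₁ = d₂ := by
  rw [← sub_eq_zero, ← Module.forall_dual_apply_eq_zero_iff ℝ (d₁ - d₂)]
  intro ℓ
  rw [map_sub, (h₁ ℓ).unique (h₂ ℓ), sub_self]

lemma HasPDeriv.mem {f : E → A} {a v : E} {d : A} (S : Submodule ℝ A)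
    (hd : HasPDeriv f a v d) (hf : ∀ᶠ t : ℝ in nhds 0, f (a + t • v) ∈ S) : d ∈ S := by
  by_contra hds
  have h1 : ¬ ∀ φ : Module.Dual ℝ (A ⧸ S), φ (Submodule.Quotient.mk d) = 0 := by
    rw [Module.forall_dual_apply_eq_zero_iff ℝ, Submodule.Quotient.mk_eq_zero]
    exact hds
  obtain ⟨φ, hφ⟩ := not_forall.1 h1
  set ℓ : A →ₗ[ℝ] ℝ := φ.comp S.mkQ with hℓ
  have h0 : (fun t : ℝ => ℓ (f (a + t • v))) =ᶠ[nhds 0] fun _ => (0:ℝ) :=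
    hf.mono fun t ht => by
      simp only [hℓ, LinearMap.comp_apply, Submodule.mkQ_apply,
        (Submodule.Quotient.mk_eq_zero S).2 ht, map_zero]
  have h2 : ℓ d = 0 :=
    (((hd ℓ).congr_of_eventuallyEq h0.symm).unique (hasDerivAt_const 0 0))
  exact hφ h2

lemma HasPDeriv.add {f g : E → A} {a v : E} {d e : A}
    (hf : HasPDeriv f a v d) (hg : HasPDeriv g a v e) :
    HasPDeriv (fun z => f z + g z) a v (d + e) := fun ℓ => by
  simpa only [map_add] using (hf ℓ).fun_add (hg ℓ)

end Toolkit


section Cliff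

variable (p q : ℕ) (Q : QuadraticForm ℝ (EuclideanSpace ℝ (Fin (p + q))))

lemma isOrtho_of_inner (hQ : ∀ v, Q v = -‖v‖ ^ 2)
    {u v : EuclideanSpace ℝ (Fin (p + q))} (h : ⟪u, v⟫ = 0) :
    Q.IsOrtho u v := by
  rw [QuadraticMap.isOrtho_def, hQ, hQ, hQ, norm_add_sq_real, h]
  ring

lemma embX_eq_sum (x : EuclideanSpace ℝ (Fin p)) :
    embX p q x = ∑ i, x i • EuclideanSpace.single (Fin.castAdd q i) (1:ℝ) := by
  ext k
  rw [WithLp.ofLp_sum, Finset.sum_apply k Finset.univ _]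
  induction k using Fin.addCases with
  | left i =>
      simp [EuclideanSpace.single_apply, Fin.castAdd_inj]
  | right j =>
      rw [embX_natAdd]
      refine (Finset.sum_eq_zero fun i _ => ?_).symm
      have : (EuclideanSpace.single (Fin.castAdd q i) (1:ℝ)) (Fin.natAdd p j) = 0 := by
        rw [EuclideanSpace.single_apply, if_neg (by exact (castAdd_ne_natAdd' p q i j).symm)]
      show x i * _ = 0
      exact mul_eq_zero_of_right _ this

lemma ι_embX_eq_sum (x : EuclideanSpace ℝ (Fin p)) :
    CliffordAlgebra.ι Q (embX p q x)
      = ∑ i, x i • CliffordAlgebra.ι Q (EuclideanSpace.single (Fin.castAdd q i) (1:ℝ)) := by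
  rw [embX_eq_sum, map_sum]
  simp

lemma ι_embX_sq (hQ : ∀ v, Q v = -‖v‖ ^ 2) (x : EuclideanSpace ℝ (Fin p)) :
    CliffordAlgebra.ι Q (embX p q x) * CliffordAlgebra.ι Q (embX p q x)
      = algebraMap ℝ _ (-‖x‖ ^ 2) := by
  rw [CliffordAlgebra.ι_sq_scalar, hQ, norm_embX]

/-- The reflection negating the first `p` coordinates, as a linear map. -/
def sigmaL : EuclideanSpace ℝ (Fin (p + q)) →ₗ[ℝ] EuclideanSpace ℝ (Fin (p + q)) where
  toFun z := embY p q (ypart p q z) - embX p q (xpart p q z)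
  map_add' z w := by
    ext k
    induction k using Fin.addCases with
    | left i => simp only [PiLp.sub_apply, PiLp.add_apply, embY_castAdd, embX_castAdd,
        xpart_apply, ypart_apply]; ring
    | right j => simp only [PiLp.sub_apply, PiLp.add_apply, embY_natAdd, embX_natAdd,
        xpart_apply, ypart_apply]; ring
  map_smul' c z := by
    ext k
    induction k using Fin.addCases with
    | left i => simp [mul_sub]
    | right j => simp [mul_sub]

@[simp] lemma sigmaL_embX (x : EuclideanSpace ℝ (Fin p)) :
    sigmaL p q (embX p q x) = - embX p q x := by
  ext k
  induction k using Fin.addCases with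
  | left i => simp [sigmaL]
  | right j => simp [sigmaL]

@[simp] lemma sigmaL_single_natAdd (j : Fin q) (c : ℝ) :
    sigmaL p q (EuclideanSpace.single (Fin.natAdd p j) c)
      = EuclideanSpace.single (Fin.natAdd p j) c := by
  ext k
  induction k using Fin.addCases with
  | left i =>
      simp only [sigmaL, LinearMap.coe_mk, AddHom.coe_mk, PiLp.sub_apply, embY_castAdd,
        xpart_single_natAdd, embX_zero, PiLp.zero_apply, zero_sub, neg_zero,
        EuclideanSpace.single_apply]
      rw [if_neg (castAdd_ne_natAdd' p q i j)]
  | right j' =>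
      simp [sigmaL, EuclideanSpace.single_apply, natAdd_inj' p q]

lemma norm_sigmaL (z : EuclideanSpace ℝ (Fin (p + q))) : ‖sigmaL p q z‖ = ‖z‖ := by
  set x := xpart p q z with hxdef
  set y := ypart p q z with hydef
  have hz : ‖z‖ ^ 2 = ‖x‖ ^ 2 + ‖y‖ ^ 2 := by
    conv_lhs => rw [← embX_xpart_add_embY_ypart p q z]
    rw [norm_add_sq_real, inner_embX_embY, norm_embX, norm_embY, ← hxdef, ← hydef]
    ring
  have hs : ‖sigmaL p q z‖ ^ 2 = ‖x‖ ^ 2 + ‖y‖ ^ 2 := by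
    have h0 : sigmaL p q z = embY p q y - embX p q x := rfl
    have hyx : ⟪embY p q y, embX p q x⟫ = 0 := by rw [real_inner_comm, inner_embX_embY]
    rw [h0, norm_sub_sq_real, hyx, norm_embX, norm_embY]
    ring
  rw [← Real.sqrt_sq (norm_nonneg (sigmaL p q z)), ← Real.sqrt_sq (norm_nonneg z), hs, hz]

/-- The reflection as a quadratic-form isometry. -/
def sigmaIso (hQ : ∀ v, Q v = -‖v‖ ^ 2) : Q →qᵢ Q where
  toLinearMap := sigmaL p q
  map_app' z := by show Q (sigmaL p q z) = Q z; rw [hQ, hQ, norm_sigmaL]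

/-- The algebra automorphism negating the `x`-direction generators. -/
def alphaHom (hQ : ∀ v, Q v = -‖v‖ ^ 2) : CliffordAlgebra Q →ₐ[ℝ] CliffordAlgebra Q :=
  CliffordAlgebra.map (sigmaIso p q Q hQ)

lemma alphaHom_ι (hQ : ∀ v, Q v = -‖v‖ ^ 2) (u : EuclideanSpace ℝ (Fin (p + q))) :
    alphaHom p q Q hQ (CliffordAlgebra.ι Q u) = CliffordAlgebra.ι Q (sigmaL p q u) :=
  CliffordAlgebra.map_apply_ι _ _

lemma alphaHom_fixes (hQ : ∀ v, Q v = -‖v‖ ^ 2) {w : CliffordAlgebra Q}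
    (hw : w ∈ Algebra.adjoin ℝ (Set.range fun j : Fin q =>
      CliffordAlgebra.ι Q (EuclideanSpace.single (Fin.natAdd p j) (1 : ℝ)))) :
    alphaHom p q Q hQ w = w := by
  induction hw using Algebra.adjoin_induction with
  | mem u hu =>
      obtain ⟨j, rfl⟩ := hu
      rw [alphaHom_ι, sigmaL_single_natAdd]
  | algebraMap r => exact (alphaHom p q Q hQ).commutes r
  | add u v _ _ hu hv => rw [map_add, hu, hv]
  | mul u v _ _ hu hv => rw [map_mul, hu, hv]

lemma separation (hQ : ∀ v, Q v = -‖v‖ ^ 2) {x : EuclideanSpace ℝ (Fin p)} (hx : x ≠ 0)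
    {u v : CliffordAlgebra Q}
    (hu : u ∈ Algebra.adjoin ℝ (Set.range fun j : Fin q =>
      CliffordAlgebra.ι Q (EuclideanSpace.single (Fin.natAdd p j) (1 : ℝ))))
    (hv : v ∈ Algebra.adjoin ℝ (Set.range fun j : Fin q =>
      CliffordAlgebra.ι Q (EuclideanSpace.single (Fin.natAdd p j) (1 : ℝ))))
    (h : u + CliffordAlgebra.ι Q (embX p q x) * v = 0) : u = 0 ∧ v = 0 := by
  have h' : u - CliffordAlgebra.ι Q (embX p q x) * v = 0 := by
    have := congrArg (alphaHom p q Q hQ) h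
    rwa [map_add, map_mul, alphaHom_fixes p q Q hQ hu, alphaHom_fixes p q Q hQ hv,
      alphaHom_ι, sigmaL_embX, map_neg, neg_mul, ← sub_eq_add_neg, map_zero] at this
  have hm : CliffordAlgebra.ι Q (embX p q x) * v = 0 := by
    have hu' : u = CliffordAlgebra.ι Q (embX p q x) * v := sub_eq_zero.1 h'
    have h2 : CliffordAlgebra.ι Q (embX p q x) * v
        + CliffordAlgebra.ι Q (embX p q x) * v = 0 := by rw [← hu']; exact hu' ▸ h
    have h3 : (2:ℝ) • (CliffordAlgebra.ι Q (embX p q x) * v) = 0 := by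
      rw [two_smul]; exact h2
    simpa using (smul_eq_zero.1 h3).resolve_left (by norm_num)
  constructor
  · have := h
    rw [hm, add_zero] at this
    exact this
  · have h4 := congrArg (fun w => CliffordAlgebra.ι Q (embX p q x) * w) hm
    simp only [mul_zero] at h4
    rw [← mul_assoc, ι_embX_sq p q Q hQ, Algebra.algebraMap_eq_smul_one, smul_mul_assoc,
      one_mul] at h4
    have hne : -‖x‖ ^ 2 ≠ 0 := by
      simpa using pow_ne_zero 2 (norm_ne_zero_iff.2 hx)
    exact (smul_eq_zero.1 h4).resolve_left hne
  
end Cliff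

section Analysis

lemma euclid_decomp {n : ℕ} (u : EuclideanSpace ℝ (Fin n)) :
    u = ∑ j, u j • EuclideanSpace.single j (1:ℝ) := by
  ext k
  rw [WithLp.ofLp_sum, Finset.sum_apply]
  simp [EuclideanSpace.single_apply]

lemma hasDerivAt_norm_line {n : ℕ} (x v : EuclideanSpace ℝ (Fin n)) (hx : x ≠ 0) :
    HasDerivAt (fun t : ℝ => ‖x + t • v‖) (⟪x, v⟫ / ‖x‖) 0 := by
  have hr : (0:ℝ) < ‖x‖ := norm_pos_iff.2 hx
  have hpoly : ∀ t : ℝ, ‖x + t • v‖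
      = Real.sqrt (‖x‖ ^ 2 + t * (2 * ⟪x, v⟫) + t ^ 2 * ‖v‖ ^ 2) := by
    intro t
    rw [← Real.sqrt_sq (norm_nonneg (x + t • v))]
    congr 1
    rw [norm_add_sq_real, real_inner_smul_right, norm_smul]
    simp only [Real.norm_eq_abs, mul_pow, sq_abs]
    ring
  have hg : HasDerivAt (fun t : ℝ => ‖x‖ ^ 2 + t * (2 * ⟪x, v⟫) + t ^ 2 * ‖v‖ ^ 2)
      (2 * ⟪x, v⟫) 0 := by
    have h1 : HasDerivAt (fun t : ℝ => t * (2 * ⟪x, v⟫)) (2 * ⟪x, v⟫) 0 :=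
      hasDerivAt_mul_const _
    have h2 : HasDerivAt (fun t : ℝ => t ^ 2 * ‖v‖ ^ 2) 0 0 := by
      simpa using (hasDerivAt_pow 2 (0:ℝ)).mul_const (‖v‖ ^ 2)
    simpa using (h1.const_add (‖x‖ ^ 2)).fun_add h2
  have hne : ‖x‖ ^ 2 + 0 * (2 * ⟪x, v⟫) + 0 ^ 2 * ‖v‖ ^ 2 ≠ 0 := by
    have h9 : ‖x‖ ^ 2 + 0 * (2 * ⟪x, v⟫) + 0 ^ 2 * ‖v‖ ^ 2 = ‖x‖ ^ 2 := by ring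
    rw [h9]
    exact (pow_pos hr 2).ne'
  have hmain := (Real.hasDerivAt_sqrt hne).comp 0 hg
  simp only [Function.comp_def] at hmain
  rw [show (fun t : ℝ => ‖x + t • v‖) = _ from funext hpoly]
  refine hmain.congr_deriv ?_
  have h9 : ‖x‖ ^ 2 + 0 * (2 * ⟪x, v⟫) + 0 ^ 2 * ‖v‖ ^ 2 = ‖x‖ ^ 2 := by ring
  rw [h9, Real.sqrt_sq hr.le]
  field_simp

/-- Identification of the weak directional derivative of a two-variable function
along a differentiable curve. -/
lemma hasDerivAt_comp_curve {q : ℕ} {Cl : Type*} [AddCommGroup Cl] [Module ℝ Cl]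
    (G : ℝ → EuclideanSpace ℝ (Fin q) → Cl)
    (Gr : ℝ → EuclideanSpace ℝ (Fin q) → Cl)
    (Gy : ℝ → EuclideanSpace ℝ (Fin q) → Fin q → Cl)
    {r : ℝ} (hr : 0 < r) {y : EuclideanSpace ℝ (Fin q)}
    (hGdiff : ∀ ℓ : Cl →ₗ[ℝ] ℝ, DifferentiableOn ℝ
      (fun w : ℝ × EuclideanSpace ℝ (Fin q) => ℓ (G w.1 w.2)) {w | 0 < w.1})
    (hGr : HasPDeriv (fun w : ℝ × EuclideanSpace ℝ (Fin q) => G w.1 w.2) (r, y) (1, 0) (Gr r y))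
    (hGy : ∀ j, HasPDeriv (fun w : ℝ × EuclideanSpace ℝ (Fin q) => G w.1 w.2) (r, y)
      (0, EuclideanSpace.single j 1) (Gy r y j))
    {ρ : ℝ → ℝ} {ρ' : ℝ} (hρ : HasDerivAt ρ ρ' 0) (hρ0 : ρ 0 = r)
    {Y : ℝ → EuclideanSpace ℝ (Fin q)} {vy : EuclideanSpace ℝ (Fin q)}
    (hY : HasDerivAt Y vy 0) (hY0 : Y 0 = y)
    (ℓ : Cl →ₗ[ℝ] ℝ) :
    HasDerivAt (fun t => ℓ (G (ρ t) (Y t)))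
      (ρ' * ℓ (Gr r y) + ∑ j, vy j * ℓ (Gy r y j)) 0 := by
  have hopen : IsOpen {w : ℝ × EuclideanSpace ℝ (Fin q) | 0 < w.1} :=
    isOpen_lt continuous_const continuous_fst
  have hD : DifferentiableAt ℝ (fun w : ℝ × EuclideanSpace ℝ (Fin q) => ℓ (G w.1 w.2)) (r, y) :=
    (hGdiff ℓ).differentiableAt (hopen.mem_nhds (by exact hr))
  set L := fderiv ℝ (fun w : ℝ × EuclideanSpace ℝ (Fin q) => ℓ (G w.1 w.2)) (r, y) with hL
  have hFD : HasFDerivAt (fun w : ℝ × EuclideanSpace ℝ (Fin q) => ℓ (G w.1 w.2)) L (r, y) :=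
    hD.hasFDerivAt
  -- identify L on basis directions
  have hline : ∀ w : ℝ × EuclideanSpace ℝ (Fin q),
      HasDerivAt (fun t : ℝ => (r, y) + t • w) w 0 := by
    intro w
    simpa using ((hasDerivAt_id (0:ℝ)).smul_const w).const_add (r, y)
  have hLgen : ∀ w : ℝ × EuclideanSpace ℝ (Fin q),
      HasDerivAt (fun t : ℝ => ℓ (G ((r, y) + t • w).1 ((r, y) + t • w).2)) (L w) 0 := by
    intro w
    have hl : HasFDerivAt (fun w : ℝ × EuclideanSpace ℝ (Fin q) => ℓ (G w.1 w.2)) L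
        ((fun t : ℝ => (r, y) + t • w) 0) := by
      simpa using hFD
    have := hl.comp_hasDerivAt (0:ℝ) (hline w)
    simpa [Function.comp_def] using this
  have hL1 : L (1, 0) = ℓ (Gr r y) := (hLgen (1, 0)).unique (hGr ℓ)
  have hLy : ∀ j, L (0, EuclideanSpace.single j 1) = ℓ (Gy r y j) := fun j =>
    (hLgen (0, EuclideanSpace.single j 1)).unique (hGy j ℓ)
  -- decompose a general direction
  have hdec : ∀ (s : ℝ) (u : EuclideanSpace ℝ (Fin q)),
      L (s, u) = s * ℓ (Gr r y) + ∑ j, u j * ℓ (Gy r y j) := by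
    intro s u
    have hu : ((s, u) : ℝ × EuclideanSpace ℝ (Fin q))
        = s • ((1:ℝ), (0:EuclideanSpace ℝ (Fin q)))
          + ∑ j, u j • ((0:ℝ), EuclideanSpace.single j (1:ℝ)) := by
      rw [Prod.ext_iff]
      refine ⟨by simp [Prod.fst_sum], ?_⟩
      simp only [Prod.snd_add, Prod.smul_snd, Prod.snd_sum, smul_zero, zero_add]
      exact euclid_decomp u
    rw [hu, map_add, LinearMapClass.map_smul, map_sum]
    congr 1
    · rw [hL1]; simp [smul_eq_mul]
    · exact Finset.sum_congr rfl fun j _ => by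
        rw [LinearMapClass.map_smul, hLy j, smul_eq_mul]
  -- chain rule along the curve
  have hcurve : HasDerivAt (fun t => (ρ t, Y t)) (ρ', vy) 0 := hρ.prodMk hY
  have hl : HasFDerivAt (fun w : ℝ × EuclideanSpace ℝ (Fin q) => ℓ (G w.1 w.2)) L
      ((fun t => (ρ t, Y t)) 0) := by
    rw [show (fun t => (ρ t, Y t)) 0 = (r, y) from by show (ρ 0, Y 0) = (r, y); rw [hρ0, hY0]]
    exact hFD
  have hfin := hl.comp_hasDerivAt (0:ℝ) hcurve
  rw [← hdec ρ' vy]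
  simpa [Function.comp_def] using hfin

end Analysis

section Master

/-- The claimed directional derivative of the hypermonogenic ansatz at `z` in direction `v`. -/
def dval (p q : ℕ) (Q : QuadraticForm ℝ (EuclideanSpace ℝ (Fin (p + q))))
    (B Ar Br : ℝ → EuclideanSpace ℝ (Fin q) → CliffordAlgebra Q)
    (Ay By : ℝ → EuclideanSpace ℝ (Fin q) → Fin q → CliffordAlgebra Q)
    (z v : EuclideanSpace ℝ (Fin (p + q))) : CliffordAlgebra Q :=
  (⟪xpart p q z, xpart p q v⟫ / ‖xpart p q z‖) • Ar ‖xpart p q z‖ (ypart p q z)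
  + ∑ j, (ypart p q v) j • Ay ‖xpart p q z‖ (ypart p q z) j
  + (-(⟪xpart p q z, xpart p q v⟫ / ‖xpart p q z‖ / ‖xpart p q z‖ ^ 2)) •
      (CliffordAlgebra.ι Q (embX p q (xpart p q z)) * B ‖xpart p q z‖ (ypart p q z))
  + ‖xpart p q z‖⁻¹ •
      (CliffordAlgebra.ι Q (embX p q (xpart p q v)) * B ‖xpart p q z‖ (ypart p q z))
  + ‖xpart p q z‖⁻¹ • (CliffordAlgebra.ι Q (embX p q (xpart p q z)) *
      ((⟪xpart p q z, xpart p q v⟫ / ‖xpart p q z‖) • Br ‖xpart p q z‖ (ypart p q z)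
        + ∑ j, (ypart p q v) j • By ‖xpart p q z‖ (ypart p q z) j))

variable (p q : ℕ) (Q : QuadraticForm ℝ (EuclideanSpace ℝ (Fin (p + q))))
  (A B Ar Br : ℝ → EuclideanSpace ℝ (Fin q) → CliffordAlgebra Q)
  (Ay By : ℝ → EuclideanSpace ℝ (Fin q) → Fin q → CliffordAlgebra Q)

lemma key_hasPDeriv
    (hAdiff : ∀ ℓ : CliffordAlgebra Q →ₗ[ℝ] ℝ, DifferentiableOn ℝ
      (fun w : ℝ × EuclideanSpace ℝ (Fin q) => ℓ (A w.1 w.2)) {w | 0 < w.1})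
    (hBdiff : ∀ ℓ : CliffordAlgebra Q →ₗ[ℝ] ℝ, DifferentiableOn ℝ
      (fun w : ℝ × EuclideanSpace ℝ (Fin q) => ℓ (B w.1 w.2)) {w | 0 < w.1})
    (hAr : ∀ r, 0 < r → ∀ y, HasPDeriv
      (fun w : ℝ × EuclideanSpace ℝ (Fin q) => A w.1 w.2) (r, y) (1, 0) (Ar r y))
    (hBr : ∀ r, 0 < r → ∀ y, HasPDeriv
      (fun w : ℝ × EuclideanSpace ℝ (Fin q) => B w.1 w.2) (r, y) (1, 0) (Br r y))
    (hAy : ∀ r, 0 < r → ∀ y j, HasPDeriv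
      (fun w : ℝ × EuclideanSpace ℝ (Fin q) => A w.1 w.2) (r, y)
      (0, EuclideanSpace.single j 1) (Ay r y j))
    (hBy : ∀ r, 0 < r → ∀ y j, HasPDeriv
      (fun w : ℝ × EuclideanSpace ℝ (Fin q) => B w.1 w.2) (r, y)
      (0, EuclideanSpace.single j 1) (By r y j))
    (z v : EuclideanSpace ℝ (Fin (p + q))) (hx : xpart p q z ≠ 0) :
    HasPDeriv (fun z' => A ‖xpart p q z'‖ (ypart p q z') +
        ‖xpart p q z'‖⁻¹ • (CliffordAlgebra.ι Q (embX p q (xpart p q z')) *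
          B ‖xpart p q z'‖ (ypart p q z'))) z v
      (dval p q Q B Ar Br Ay By z v) := by
  intro ℓ
  set x := xpart p q z with hxdef
  set y := ypart p q z with hydef
  set vx := xpart p q v with hvxdef
  set vy := ypart p q v with hvydef
  have hr : (0:ℝ) < ‖x‖ := norm_pos_iff.2 hx
  have hxt : ∀ t : ℝ, xpart p q (z + t • v) = x + t • vx := fun t => xpart_linear p q z v t
  have hyt : ∀ t : ℝ, ypart p q (z + t • v) = y + t • vy := fun t => ypart_linear p q z v t
  have hρ : HasDerivAt (fun t : ℝ => ‖x + t • vx‖) (⟪x, vx⟫ / ‖x‖) 0 :=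
    hasDerivAt_norm_line x vx hx
  have hρ0 : ‖x + (0:ℝ) • vx‖ = ‖x‖ := by simp
  have hY : HasDerivAt (fun t : ℝ => y + t • vy) vy 0 := by
    simpa using ((hasDerivAt_id (0:ℝ)).smul_const vy).const_add y
  have hY0 : y + (0:ℝ) • vy = y := by simp
  set M₁ : CliffordAlgebra Q := CliffordAlgebra.ι Q (embX p q x) with hM₁
  set M₂ : CliffordAlgebra Q := CliffordAlgebra.ι Q (embX p q vx) with hM₂
  set ℓ₁ : CliffordAlgebra Q →ₗ[ℝ] ℝ := ℓ ∘ₗ LinearMap.mulLeft ℝ M₁ with hℓ₁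
  set ℓ₂ : CliffordAlgebra Q →ₗ[ℝ] ℝ := ℓ ∘ₗ LinearMap.mulLeft ℝ M₂ with hℓ₂
  have hℓ₁app : ∀ C, ℓ₁ C = ℓ (M₁ * C) := fun C => rfl
  have hℓ₂app : ∀ C, ℓ₂ C = ℓ (M₂ * C) := fun C => rfl
  have hAc := hasDerivAt_comp_curve A Ar Ay hr hAdiff (hAr ‖x‖ hr y)
    (fun j => hAy ‖x‖ hr y j) hρ hρ0 hY hY0 ℓ
  have hBc1 := hasDerivAt_comp_curve B Br By hr hBdiff (hBr ‖x‖ hr y)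
    (fun j => hBy ‖x‖ hr y j) hρ hρ0 hY hY0 ℓ₁
  have hBc2 := hasDerivAt_comp_curve B Br By hr hBdiff (hBr ‖x‖ hr y)
    (fun j => hBy ‖x‖ hr y j) hρ hρ0 hY hY0 ℓ₂
  have hinv : HasDerivAt (fun t : ℝ => ‖x + t • vx‖⁻¹) (-(⟪x, vx⟫ / ‖x‖) / ‖x‖ ^ 2) 0 := by
    have h0 : ‖x + (0:ℝ) • vx‖ ≠ 0 := by rw [hρ0]; exact hr.ne'
    simpa [hρ0] using hρ.fun_inv h0
  have hprod : HasDerivAt (fun t : ℝ => t * ℓ₂ (B ‖x + t • vx‖ (y + t • vy)))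
      (ℓ₂ (B ‖x‖ y)) 0 := by
    simpa [hρ0, hY0] using (hasDerivAt_id (0:ℝ)).fun_mul hBc2
  have hsum := hAc.fun_add (hinv.fun_mul (hBc1.fun_add hprod))
  simp only [hρ0, hY0, zero_mul, mul_zero, add_zero, zero_add] at hsum
  have hfun : (fun t : ℝ => ℓ (A ‖xpart p q (z + t • v)‖ (ypart p q (z + t • v)) +
      ‖xpart p q (z + t • v)‖⁻¹ • (CliffordAlgebra.ι Q (embX p q (xpart p q (z + t • v))) *
        B ‖xpart p q (z + t • v)‖ (ypart p q (z + t • v)))))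
      = fun t : ℝ => ℓ (A ‖x + t • vx‖ (y + t • vy))
        + ‖x + t • vx‖⁻¹ * (ℓ₁ (B ‖x + t • vx‖ (y + t • vy))
            + t * ℓ₂ (B ‖x + t • vx‖ (y + t • vy))) := by
    funext t
    rw [hxt, hyt]
    rw [map_add, LinearMapClass.map_smul, smul_eq_mul]
    congr 1
    rw [embX_add, embX_smul, map_add, LinearMapClass.map_smul, add_mul, smul_mul_assoc,
      map_add, LinearMapClass.map_smul, smul_eq_mul, hℓ₁app, hℓ₂app]
  rw [hfun]
  refine hsum.congr_deriv ?_
  simp only [dval, map_add, LinearMapClass.map_smul, map_sum, smul_eq_mul, hℓ₁app, hℓ₂app,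
    mul_add, Finset.mul_sum, map_neg, mul_smul_comm]
  simp only [LinearMapClass.map_smul, smul_eq_mul, hM₁, hM₂]
  ring_nf
  rfl


lemma sum_smul_mul (x : EuclideanSpace ℝ (Fin p)) (c : ℝ) (C : CliffordAlgebra Q) :
    ∑ i, (c * x i) • (CliffordAlgebra.ι Q (EuclideanSpace.single (Fin.castAdd q i) (1:ℝ)) * C)
      = c • (CliffordAlgebra.ι Q (embX p q x) * C) := by
  rw [ι_embX_eq_sum p q Q x, Finset.sum_mul, Finset.smul_sum]
  exact Finset.sum_congr rfl fun i _ => by rw [smul_mul_assoc, smul_smul]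

lemma dval_castAdd (z : EuclideanSpace ℝ (Fin (p + q))) (i : Fin p) :
    dval p q Q B Ar Br Ay By z (EuclideanSpace.single (Fin.castAdd q i) (1:ℝ))
      = (xpart p q z i / ‖xpart p q z‖) • Ar ‖xpart p q z‖ (ypart p q z)
      + (-(xpart p q z i / ‖xpart p q z‖ / ‖xpart p q z‖ ^ 2)) •
          (CliffordAlgebra.ι Q (embX p q (xpart p q z)) * B ‖xpart p q z‖ (ypart p q z))
      + ‖xpart p q z‖⁻¹ •
          (CliffordAlgebra.ι Q (EuclideanSpace.single (Fin.castAdd q i) (1:ℝ)) *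
            B ‖xpart p q z‖ (ypart p q z))
      + ‖xpart p q z‖⁻¹ • (CliffordAlgebra.ι Q (embX p q (xpart p q z)) *
          ((xpart p q z i / ‖xpart p q z‖) • Br ‖xpart p q z‖ (ypart p q z))) := by
  simp only [dval, xpart_single_castAdd, ypart_single_castAdd, embX_single,
    EuclideanSpace.inner_single_right, one_mul, PiLp.zero_apply, zero_smul,
    Finset.sum_const_zero, add_zero, smul_zero, starRingEnd_apply, star_trivial]

lemma dval_natAdd (z : EuclideanSpace ℝ (Fin (p + q))) (j : Fin q) :
    dval p q Q B Ar Br Ay By z (EuclideanSpace.single (Fin.natAdd p j) (1:ℝ))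
      = Ay ‖xpart p q z‖ (ypart p q z) j
      + ‖xpart p q z‖⁻¹ • (CliffordAlgebra.ι Q (embX p q (xpart p q z)) *
          By ‖xpart p q z‖ (ypart p q z) j) := by
  simp only [dval, xpart_single_natAdd, ypart_single_natAdd, inner_zero_right, zero_div,
    zero_smul, embX_zero, map_zero, zero_mul, smul_zero, add_zero, zero_add, neg_zero,
    EuclideanSpace.single_apply, ite_smul, one_smul]
  rw [Finset.sum_ite_eq' Finset.univ j, Finset.sum_ite_eq' Finset.univ j]
  simp

lemma sum_dval (hQ : ∀ v, Q v = -‖v‖ ^ 2) (z : EuclideanSpace ℝ (Fin (p + q)))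
    (hx : xpart p q z ≠ 0) :
    ∑ k, CliffordAlgebra.ι Q (EuclideanSpace.single k 1) *
        dval p q Q B Ar Br Ay By z (EuclideanSpace.single k 1)
      = ((∑ j, CliffordAlgebra.ι Q (EuclideanSpace.single (Fin.natAdd p j) (1:ℝ)) *
            Ay ‖xpart p q z‖ (ypart p q z) j)
          - Br ‖xpart p q z‖ (ypart p q z)
          - (((p:ℝ) - 1) / ‖xpart p q z‖) • B ‖xpart p q z‖ (ypart p q z))
        + CliffordAlgebra.ι Q (embX p q (xpart p q z)) *
            (‖xpart p q z‖⁻¹ • (Ar ‖xpart p q z‖ (ypart p q z)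
              - ∑ j, CliffordAlgebra.ι Q (EuclideanSpace.single (Fin.natAdd p j) (1:ℝ)) *
                  By ‖xpart p q z‖ (ypart p q z) j)) := by
  set x := xpart p q z with hxdef
  set y := ypart p q z with hydef
  have hr : (0:ℝ) < ‖x‖ := norm_pos_iff.2 hx
  set r := ‖x‖ with hrdef
  set M : CliffordAlgebra Q := CliffordAlgebra.ι Q (embX p q x) with hM
  have hMsq : ∀ C : CliffordAlgebra Q, M * (M * C) = (-(r ^ 2)) • C := by
    intro C
    rw [hM, ← mul_assoc, ι_embX_sq p q Q hQ, ← Algebra.smul_def]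
  rw [Fin.sum_univ_add (fun k => CliffordAlgebra.ι Q (EuclideanSpace.single k 1) *
    dval p q Q B Ar Br Ay By z (EuclideanSpace.single k 1))]
  -- the x-part of the sum
  have hcast : (∑ i : Fin p, CliffordAlgebra.ι Q (EuclideanSpace.single (Fin.castAdd q i) 1) *
        dval p q Q B Ar Br Ay By z (EuclideanSpace.single (Fin.castAdd q i) 1))
      = r⁻¹ • (M * Ar r y) + r⁻¹ • B r y + (-((p:ℝ) * r⁻¹)) • B r y - Br r y := by
    have hterm : ∀ i : Fin p,
        CliffordAlgebra.ι Q (EuclideanSpace.single (Fin.castAdd q i) 1) *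
          dval p q Q B Ar Br Ay By z (EuclideanSpace.single (Fin.castAdd q i) 1)
        = (r⁻¹ * x i) • (CliffordAlgebra.ι Q (EuclideanSpace.single (Fin.castAdd q i) (1:ℝ)) *
              Ar r y)
          + ((-(r⁻¹ * r⁻¹ * r⁻¹)) * x i) •
              (CliffordAlgebra.ι Q (EuclideanSpace.single (Fin.castAdd q i) (1:ℝ)) * (M * B r y))
          + r⁻¹ • (CliffordAlgebra.ι Q (EuclideanSpace.single (Fin.castAdd q i) (1:ℝ)) *
              (CliffordAlgebra.ι Q (EuclideanSpace.single (Fin.castAdd q i) (1:ℝ)) * B r y))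
          + ((r⁻¹ * r⁻¹) * x i) •
              (CliffordAlgebra.ι Q (EuclideanSpace.single (Fin.castAdd q i) (1:ℝ)) *
                (M * Br r y)) := by
      intro i
      rw [dval_castAdd p q Q B Ar Br Ay By z i]
      simp only [← hxdef, ← hydef, ← hrdef, ← hM, mul_add, mul_smul_comm, smul_smul,
        mul_smul_comm]
      match_scalars
      all_goals field_simp
      all_goals try ring
      all_goals tauto
    rw [Finset.sum_congr rfl fun i _ => hterm i]
    simp only [Finset.sum_add_distrib]
    rw [sum_smul_mul p q Q x r⁻¹ (Ar r y), sum_smul_mul p q Q x (-(r⁻¹ * r⁻¹ * r⁻¹)) (M * B r y),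
      sum_smul_mul p q Q x (r⁻¹ * r⁻¹) (M * Br r y)]
    have hsq : ∀ i : Fin p, CliffordAlgebra.ι Q (EuclideanSpace.single (Fin.castAdd q i) (1:ℝ)) *
        (CliffordAlgebra.ι Q (EuclideanSpace.single (Fin.castAdd q i) (1:ℝ)) * B r y)
        = ((-1 : ℝ)) • B r y := by
      intro i
      rw [← mul_assoc, CliffordAlgebra.ι_sq_scalar, hQ, EuclideanSpace.norm_single,
        ← Algebra.smul_def]
      norm_num
    rw [Finset.sum_congr rfl fun i _ => by rw [hsq i]]
    rw [Finset.sum_const, Finset.card_univ, Fintype.card_fin, ← Nat.cast_smul_eq_nsmul ℝ]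
    rw [← hM, hMsq (B r y), hMsq (Br r y)]
    match_scalars <;> field_simp <;> ring
  -- the y-part of the sum
  have hnat : (∑ j : Fin q, CliffordAlgebra.ι Q (EuclideanSpace.single (Fin.natAdd p j) 1) *
        dval p q Q B Ar Br Ay By z (EuclideanSpace.single (Fin.natAdd p j) 1))
      = (∑ j, CliffordAlgebra.ι Q (EuclideanSpace.single (Fin.natAdd p j) (1:ℝ)) * Ay r y j)
        - r⁻¹ • (M * ∑ j, CliffordAlgebra.ι Q (EuclideanSpace.single (Fin.natAdd p j) (1:ℝ)) *
            By r y j) := by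
    have hortho : ∀ j : Fin q, Q.IsOrtho (EuclideanSpace.single (Fin.natAdd p j) (1:ℝ))
        (embX p q x) := by
      intro j
      apply isOrtho_of_inner p q Q hQ
      rw [← embY_single, real_inner_comm, inner_embX_embY]
    have hterm : ∀ j : Fin q,
        CliffordAlgebra.ι Q (EuclideanSpace.single (Fin.natAdd p j) 1) *
          dval p q Q B Ar Br Ay By z (EuclideanSpace.single (Fin.natAdd p j) 1)
        = CliffordAlgebra.ι Q (EuclideanSpace.single (Fin.natAdd p j) (1:ℝ)) * Ay r y j
          - r⁻¹ • (M * (CliffordAlgebra.ι Q (EuclideanSpace.single (Fin.natAdd p j) (1:ℝ)) *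
              By r y j)) := by
      intro j
      rw [dval_natAdd p q Q B Ar Br Ay By z j]
      simp only [← hxdef, ← hydef, ← hrdef, ← hM, mul_add, mul_smul_comm]
      rw [CliffordAlgebra.ι_mul_ι_mul_of_isOrtho (By r y j) (hortho j)]
      rw [hM]
      module
    rw [Finset.sum_congr rfl fun j _ => hterm j, Finset.sum_sub_distrib, ← Finset.smul_sum,
      ← Finset.mul_sum]
  rw [hcast, hnat]
  simp only [mul_smul_comm, mul_sub]
  module

end Master

section Mem

variable {p q : ℕ} {Q : QuadraticForm ℝ (EuclideanSpace ℝ (Fin (p + q)))}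

lemma pderiv_mem_r {G : ℝ → EuclideanSpace ℝ (Fin q) → CliffordAlgebra Q}
    {Gr : CliffordAlgebra Q} {r : ℝ} (hr : 0 < r) {y : EuclideanSpace ℝ (Fin q)}
    (hG𝒜 : ∀ r, 0 < r → ∀ y, G r y ∈ Algebra.adjoin ℝ
      (Set.range fun j : Fin q =>
        CliffordAlgebra.ι Q (EuclideanSpace.single (Fin.natAdd p j) (1 : ℝ))))
    (hGr : HasPDeriv (fun w : ℝ × EuclideanSpace ℝ (Fin q) => G w.1 w.2) (r, y)
      (1, 0) Gr) :
    Gr ∈ Algebra.adjoin ℝ (Set.range fun j : Fin q =>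
      CliffordAlgebra.ι Q (EuclideanSpace.single (Fin.natAdd p j) (1 : ℝ))) := by
  rw [← Subalgebra.mem_toSubmodule]
  refine hGr.mem _ ?_
  have hball : ∀ᶠ t : ℝ in nhds 0, t ∈ Set.Ioo (-r) r :=
    isOpen_Ioo.eventually_mem (by constructor <;> simp [hr])
  refine hball.mono fun t ht => ?_
  have h1 : ((r, y) + t • ((1:ℝ), (0 : EuclideanSpace ℝ (Fin q)))).1 = r + t := by
    simp
  have h2 : ((r, y) + t • ((1:ℝ), (0 : EuclideanSpace ℝ (Fin q)))).2 = y := by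
    simp
  show G _ _ ∈ _
  rw [h1, h2, Subalgebra.mem_toSubmodule]
  exact hG𝒜 (r + t) (by have := ht.1; linarith) y

lemma pderiv_mem_y {G : ℝ → EuclideanSpace ℝ (Fin q) → CliffordAlgebra Q}
    {Gy : CliffordAlgebra Q} {r : ℝ} (hr : 0 < r) {y : EuclideanSpace ℝ (Fin q)} {j : Fin q}
    (hG𝒜 : ∀ r, 0 < r → ∀ y, G r y ∈ Algebra.adjoin ℝ
      (Set.range fun j : Fin q =>
        CliffordAlgebra.ι Q (EuclideanSpace.single (Fin.natAdd p j) (1 : ℝ))))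
    (hGy : HasPDeriv (fun w : ℝ × EuclideanSpace ℝ (Fin q) => G w.1 w.2) (r, y)
      (0, EuclideanSpace.single j 1) Gy) :
    Gy ∈ Algebra.adjoin ℝ (Set.range fun j : Fin q =>
      CliffordAlgebra.ι Q (EuclideanSpace.single (Fin.natAdd p j) (1 : ℝ))) := by
  rw [← Subalgebra.mem_toSubmodule]
  refine hGy.mem _ (Filter.Eventually.of_forall fun t => ?_)
  have h1 : ((r, y) + t • ((0:ℝ), EuclideanSpace.single j (1:ℝ))).1 = r := by simp
  show G _ _ ∈ _
  rw [h1, Subalgebra.mem_toSubmodule]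
  exact hG𝒜 r hr _

end Mem

theorem stmt2 (p q : ℕ) (hp : 1 ≤ p) (hq : 1 ≤ q)
    (Q : QuadraticForm ℝ (EuclideanSpace ℝ (Fin (p + q))))
    (hQ : ∀ v, Q v = -‖v‖ ^ 2)
    -- `A`, `B` are functions of the radial variable `r` and of `y ∈ ℝ^q`
    (A B : ℝ → EuclideanSpace ℝ (Fin q) → CliffordAlgebra Q)
    -- `A`, `B` take values in the subalgebra generated by `ι(ε₁), …, ι(ε_q)`
    (hA𝒜 : ∀ r, 0 < r → ∀ y, A r y ∈ Algebra.adjoin ℝ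
      (Set.range fun j : Fin q =>
        CliffordAlgebra.ι Q (EuclideanSpace.single (Fin.natAdd p j) (1 : ℝ))))
    (hB𝒜 : ∀ r, 0 < r → ∀ y, B r y ∈ Algebra.adjoin ℝ
      (Set.range fun j : Fin q =>
        CliffordAlgebra.ι Q (EuclideanSpace.single (Fin.natAdd p j) (1 : ℝ))))
    -- `A`, `B` are differentiable on `(0,∞) × ℝ^q`
    (hAdiff : ∀ ℓ : CliffordAlgebra Q →ₗ[ℝ] ℝ, DifferentiableOn ℝ
      (fun w : ℝ × EuclideanSpace ℝ (Fin q) => ℓ (A w.1 w.2)) {w | 0 < w.1})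
    (hBdiff : ∀ ℓ : CliffordAlgebra Q →ₗ[ℝ] ℝ, DifferentiableOn ℝ
      (fun w : ℝ × EuclideanSpace ℝ (Fin q) => ℓ (B w.1 w.2)) {w | 0 < w.1})
    -- the partial derivatives of `A` and `B`: radial ones …
    (Ar Br : ℝ → EuclideanSpace ℝ (Fin q) → CliffordAlgebra Q)
    (hAr : ∀ r, 0 < r → ∀ y, HasPDeriv
      (fun w : ℝ × EuclideanSpace ℝ (Fin q) => A w.1 w.2) (r, y) (1, 0) (Ar r y))
    (hBr : ∀ r, 0 < r → ∀ y, HasPDeriv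
      (fun w : ℝ × EuclideanSpace ℝ (Fin q) => B w.1 w.2) (r, y) (1, 0) (Br r y))
    -- … and the ones in the `y`-coordinate directions
    (Ay By : ℝ → EuclideanSpace ℝ (Fin q) → Fin q → CliffordAlgebra Q)
    (hAy : ∀ r, 0 < r → ∀ y j, HasPDeriv
      (fun w : ℝ × EuclideanSpace ℝ (Fin q) => A w.1 w.2) (r, y)
      (0, EuclideanSpace.single j 1) (Ay r y j))
    (hBy : ∀ r, 0 < r → ∀ y j, HasPDeriv
      (fun w : ℝ × EuclideanSpace ℝ (Fin q) => B w.1 w.2) (r, y)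
      (0, EuclideanSpace.single j 1) (By r y j)) :
    -- `f` is monogenic on `{x ≠ 0}` …
    (∀ z : EuclideanSpace ℝ (Fin (p + q)), xpart p q z ≠ 0 →
      DiracDerivEq (fun z' => A ‖xpart p q z'‖ (ypart p q z') +
        ‖xpart p q z'‖⁻¹ • (CliffordAlgebra.ι Q (embX p q (xpart p q z')) *
          B ‖xpart p q z'‖ (ypart p q z'))) z 0)
    -- … iff the Vekua-type system holds
    ↔ (∀ r, 0 < r → ∀ y,
        (∑ j, CliffordAlgebra.ι Q (EuclideanSpace.single (Fin.natAdd p j) (1 : ℝ)) * Ay r y j)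
          - Br r y - (((p : ℝ) - 1) / r) • B r y = 0 ∧
        (∑ j, CliffordAlgebra.ι Q (EuclideanSpace.single (Fin.natAdd p j) (1 : ℝ)) * By r y j)
          - Ar r y = 0) := by
  constructor
  · intro hmono r hr y
    set x₀ : EuclideanSpace ℝ (Fin p) := EuclideanSpace.single (⟨0, hp⟩ : Fin p) r with hx₀def
    have hnx₀ : ‖x₀‖ = r := by
      rw [hx₀def, EuclideanSpace.norm_single, Real.norm_eq_abs, abs_of_pos hr]
    have hx₀ne : x₀ ≠ 0 := by
      intro h
      rw [h, norm_zero] at hnx₀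
      exact hr.ne hnx₀
    set z := embX p q x₀ + embY p q y with hzdef
    have hxz : xpart p q z = x₀ := by
      rw [hzdef]
      ext i
      simp
    have hyz : ypart p q z = y := by
      rw [hzdef]
      ext j
      simp
    have hxzne : xpart p q z ≠ 0 := by rw [hxz]; exact hx₀ne
    obtain ⟨d, hd, hsum0⟩ := hmono z hxzne
    have hdk : ∀ k, d k = dval p q Q B Ar Br Ay By z (EuclideanSpace.single k 1) := fun k =>
      (hd k).unique' (key_hasPDeriv p q Q A B Ar Br Ay By hAdiff hBdiff hAr hBr hAy hBy
        z _ hxzne)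
    rw [Finset.sum_congr rfl fun k _ => by rw [hdk k]] at hsum0
    rw [sum_dval p q Q B Ar Br Ay By hQ z hxzne, hxz, hyz, hnx₀] at hsum0
    have hη : ∀ j : Fin q, CliffordAlgebra.ι Q
        (EuclideanSpace.single (Fin.natAdd p j) (1:ℝ)) ∈ Algebra.adjoin ℝ
        (Set.range fun j : Fin q =>
          CliffordAlgebra.ι Q (EuclideanSpace.single (Fin.natAdd p j) (1 : ℝ))) :=
      fun j => Algebra.subset_adjoin ⟨j, rfl⟩
    have hAr𝒜 := pderiv_mem_r hr hA𝒜 (hAr r hr y)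
    have hBr𝒜 := pderiv_mem_r hr hB𝒜 (hBr r hr y)
    have hAy𝒜 : ∀ j, Ay r y j ∈ _ := fun j => pderiv_mem_y hr hA𝒜 (hAy r hr y j)
    have hBy𝒜 : ∀ j, By r y j ∈ _ := fun j => pderiv_mem_y hr hB𝒜 (hBy r hr y j)
    have hU𝒜 : (∑ j, CliffordAlgebra.ι Q (EuclideanSpace.single (Fin.natAdd p j) (1:ℝ)) *
        Ay r y j) - Br r y - (((p:ℝ) - 1) / r) • B r y ∈ Algebra.adjoin ℝ
        (Set.range fun j : Fin q =>
          CliffordAlgebra.ι Q (EuclideanSpace.single (Fin.natAdd p j) (1 : ℝ))) :=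
      sub_mem (sub_mem (Subalgebra.sum_mem _ fun j _ => mul_mem (hη j) (hAy𝒜 j)) hBr𝒜)
        (Subalgebra.smul_mem _ (hB𝒜 r hr y) _)
    have hV𝒜 : r⁻¹ • (Ar r y - ∑ j, CliffordAlgebra.ι Q
        (EuclideanSpace.single (Fin.natAdd p j) (1:ℝ)) * By r y j) ∈ Algebra.adjoin ℝ
        (Set.range fun j : Fin q =>
          CliffordAlgebra.ι Q (EuclideanSpace.single (Fin.natAdd p j) (1 : ℝ))) :=
      Subalgebra.smul_mem _
        (sub_mem hAr𝒜 (Subalgebra.sum_mem _ fun j _ => mul_mem (hη j) (hBy𝒜 j))) _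
    obtain ⟨hU0, hV0⟩ := separation p q Q hQ hx₀ne hU𝒜 hV𝒜 hsum0
    refine ⟨hU0, ?_⟩
    have hsub : Ar r y - ∑ j, CliffordAlgebra.ι Q
        (EuclideanSpace.single (Fin.natAdd p j) (1:ℝ)) * By r y j = 0 := by
      rcases smul_eq_zero.1 hV0 with h | h
      · exact absurd h (inv_ne_zero hr.ne')
      · exact h
    rw [sub_eq_zero]
    exact (sub_eq_zero.1 hsub).symm
  · intro hsys z hxz
    refine ⟨fun k => dval p q Q B Ar Br Ay By z (EuclideanSpace.single k 1),
      fun k => key_hasPDeriv p q Q A B Ar Br Ay By hAdiff hBdiff hAr hBr hAy hBy z _ hxz, ?_⟩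
    rw [sum_dval p q Q B Ar Br Ay By hQ z hxz]
    have hr : (0:ℝ) < ‖xpart p q z‖ := norm_pos_iff.2 hxz
    obtain ⟨h1, h2⟩ := hsys ‖xpart p q z‖ hr (ypart p q z)
    rw [h1]
    have hsub : Ar ‖xpart p q z‖ (ypart p q z) - ∑ j, CliffordAlgebra.ι Q
        (EuclideanSpace.single (Fin.natAdd p j) (1:ℝ)) *
          By ‖xpart p q z‖ (ypart p q z) j = 0 := by
      rw [sub_eq_zero]
      exact (sub_eq_zero.1 h2).symm
    rw [hsub, smul_zero, mul_zero, zero_add]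
end
end

section
/- Let a ∈ ℝ, b > 0, and z ∈ [0,1). Then Σ_{n=0}^∞ ((a)_n (b)_n / ((2b)_n · n!)) z^n = (Γ(2b) / (2^{2b-1} Γ(b)²)) · (1 - z/2)^{-a} · ∫_{-1}^{1} (1 - t²)^{b-1} (1 - (z/(2-z)) t)^{-a} dt. -/
open MeasureTheory

noncomputable section


/-- master summability: `Σ |(a)ₙ| xⁿ / n!` converges for `0 ≤ x < 1`. -/
lemma poch_summable_aux (a : ℝ) {x : ℝ} (hx0 : 0 ≤ x) (hx : x < 1) :
    Summable (fun n : ℕ => |(ascPochhammer ℝ n).eval a| * x ^ n / n.factorial) := by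
  set f : ℕ → ℝ := fun n => |(ascPochhammer ℝ n).eval a| * x ^ n / n.factorial with hf
  have hr : (x + 1) / 2 < 1 := by linarith
  have hr0 : 0 < (x + 1) / 2 := by linarith
  apply summable_of_ratio_norm_eventually_le hr
  have hx' : x < (x+1)/2 := by linarith
  -- eventually |a + n| * x ≤ (n+1) * ((x+1)/2)
  obtain ⟨N, hN⟩ : ∃ N : ℕ, ∀ n ≥ N, (|a| + 1) * x ≤ ((n:ℝ) + 1) * ((x+1)/2 - x) := by
    obtain ⟨N, hN⟩ := exists_nat_ge ((|a| + 1) * x / ((x+1)/2 - x))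
    refine ⟨N, fun n hn => ?_⟩
    have h2 : (0:ℝ) < (x+1)/2 - x := by linarith
    rw [div_le_iff₀ h2] at hN
    calc (|a|+1) * x ≤ (N:ℝ) * ((x+1)/2 - x) := hN
      _ ≤ ((n:ℝ)+1) * ((x+1)/2 - x) := by
          apply mul_le_mul_of_nonneg_right _ h2.le
          exact_mod_cast le_trans (Nat.cast_le.mpr hn) (by linarith)
  filter_upwards [Filter.eventually_atTop.mpr ⟨N, fun n hn => hN n hn⟩] with n hn
  have h1 : f (n+1) = f n * (|a + n| * x / ((n:ℝ)+1)) := by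
    simp only [hf, ascPochhammer_succ_eval, Nat.factorial_succ, abs_mul, pow_succ,
      Nat.cast_mul, Nat.cast_add, Nat.cast_one]
    field_simp
  have hfn : 0 ≤ f n := by positivity
  have key : |a + n| * x / ((n:ℝ)+1) ≤ (x+1)/2 := by
    rw [div_le_iff₀ (by positivity)]
    have : |a + n| ≤ |a| + n := (abs_add_le _ _).trans (by simp)
    calc |a + n| * x ≤ (|a| + 1 + n) * x :=
          mul_le_mul_of_nonneg_right (this.trans (by linarith)) hx0
      _ = (|a|+1) * x + (n:ℝ) * x := by ring
      _ ≤ ((n:ℝ)+1) * ((x+1)/2 - x) + ((n:ℝ)+1) * x := by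
          apply add_le_add hn
          apply mul_le_mul_of_nonneg_right _ hx0
          linarith
      _ = (x+1)/2 * ((n:ℝ)+1) := by ring
  rw [Real.norm_eq_abs, Real.norm_eq_abs, abs_of_nonneg hfn, abs_of_nonneg (by positivity), h1]
  calc f n * (|a + n| * x / ((n:ℝ)+1)) ≤ f n * ((x+1)/2) :=
        mul_le_mul_of_nonneg_left key hfn
    _ = (x+1)/2 * f n := mul_comm _ _

lemma asc_succ_left_eval (n : ℕ) (t : ℝ) :
    (ascPochhammer ℝ (n+1)).eval t = t * (ascPochhammer ℝ n).eval (t+1) := by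
  rw [ascPochhammer_succ_left, Polynomial.X_mul, Polynomial.eval_mul_X, Polynomial.eval_comp,
    Polynomial.eval_add, Polynomial.eval_X, Polynomial.eval_one, mul_comm]

lemma poch_summable (a : ℝ) {y : ℝ} (hy : |y| < 1) :
    Summable (fun n : ℕ => (ascPochhammer ℝ n).eval a / n.factorial * y ^ n) := by
  apply Summable.of_abs
  refine (poch_summable_aux a (abs_nonneg y) hy).congr fun n => ?_
  rw [abs_mul, abs_div, abs_pow, Nat.abs_cast]
  ring

lemma poch_deriv_summable (a : ℝ) {r : ℝ} (hr0 : 0 ≤ r) (hr1 : r < 1) :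
    Summable (fun n : ℕ =>
      |(ascPochhammer ℝ n).eval a| / n.factorial * ((n:ℝ) * r ^ (n-1))) := by
  rw [← summable_nat_add_iff 1]
  refine (((poch_summable_aux (a+1) hr0 hr1).mul_left |a|).congr fun n => ?_)
  have h1 : ((n:ℝ)+1) ≠ 0 := by positivity
  simp only [asc_succ_left_eval, abs_mul, Nat.factorial_succ, Nat.add_sub_cancel,
    Nat.cast_mul, Nat.cast_add, Nat.cast_one]
  field_simp

lemma poch_hasDerivAt (a : ℝ) {y : ℝ} (hy : |y| < 1) :
    HasDerivAt (fun z => ∑' n : ℕ, (ascPochhammer ℝ n).eval a / n.factorial * z ^ n)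
      (∑' n : ℕ, (ascPochhammer ℝ n).eval a / n.factorial * ((n:ℝ) * y ^ (n-1))) y := by
  set r : ℝ := (|y| + 1)/2 with hrdef
  have hr1 : r < 1 := by rw [hrdef]; linarith
  have hyr : |y| < r := by rw [hrdef]; linarith [abs_nonneg y]
  have hrpos : (0:ℝ) < r := by rw [hrdef]; positivity
  have hr0 : (0:ℝ) ≤ r := hrpos.le
  refine hasDerivAt_tsum_of_isPreconnected (y₀ := 0) (poch_deriv_summable a hr0 hr1)
    (isOpen_Ioo : IsOpen (Set.Ioo (-r) r)) (convex_Ioo _ _).isPreconnected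
    (fun n z _ => ((hasDerivAt_pow n z).const_mul ((ascPochhammer ℝ n).eval a / n.factorial)))
    (fun n z hz => ?_) ?_ ?_ (abs_lt.mp hyr |> fun h => Set.mem_Ioo.mpr h)
  · have hzr : |z| ≤ r := by
      rcases Set.mem_Ioo.mp hz with ⟨h1, h2⟩
      exact (abs_le.mpr ⟨h1.le, h2.le⟩)
    rw [Real.norm_eq_abs, abs_mul, abs_mul, abs_pow, abs_div, Nat.abs_cast, Nat.abs_cast]
    apply mul_le_mul_of_nonneg_left _ (by positivity)
    exact mul_le_mul_of_nonneg_left (pow_le_pow_left₀ (abs_nonneg z) hzr _) (by positivity)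
  · exact Set.mem_Ioo.mpr ⟨by linarith, by linarith⟩
  · exact poch_summable a (by simp)

lemma poch_ode (a : ℝ) {y : ℝ} (hy : |y| < 1) :
    (1 - y) * (∑' n : ℕ, (ascPochhammer ℝ n).eval a / n.factorial * ((n:ℝ) * y ^ (n-1)))
      = a * ∑' n : ℕ, (ascPochhammer ℝ n).eval a / n.factorial * y ^ n := by
  set D : ℕ → ℝ := fun n => (ascPochhammer ℝ (n+1)).eval a / n.factorial * y ^ n with hDdef
  have hD : Summable D := by
    refine ((poch_summable (a+1) hy).mul_left a).congr fun n => ?_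
    rw [hDdef]; simp only [asc_succ_left_eval]; ring
  have hf : Summable (fun n : ℕ =>
      (ascPochhammer ℝ n).eval a / n.factorial * ((n:ℝ) * y ^ (n-1))) := by
    apply Summable.of_abs
    refine (poch_deriv_summable a (abs_nonneg y) hy).congr fun n => ?_
    rw [abs_mul, abs_mul, abs_div, abs_pow, Nat.abs_cast, Nat.abs_cast]
  have h1 : (∑' n : ℕ, (ascPochhammer ℝ n).eval a / n.factorial * ((n:ℝ) * y ^ (n-1)))
      = ∑' n, D n := by
    rw [hf.tsum_eq_zero_add]
    simp only [Nat.cast_zero, zero_mul, mul_zero, zero_add]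
    apply tsum_congr; intro n
    rw [hDdef]
    have : ((n:ℝ)+1) ≠ 0 := by positivity
    simp only [Nat.add_sub_cancel, Nat.factorial_succ, Nat.cast_mul, Nat.cast_add,
      Nat.cast_one]
    field_simp
  set G : ℕ → ℝ := fun n => match n with | 0 => 0 | (k+1) => D k * y with hGdef
  have hG : Summable G := by
    apply (summable_nat_add_iff 1).mp
    exact (hD.mul_right y).congr fun n => rfl
  have h2 : y * ∑' n, D n = ∑' n, G n := by
    rw [hG.tsum_eq_zero_add, show G 0 = 0 from rfl, zero_add]
    rw [show (fun n => G (n+1)) = fun n => D n * y from rfl, tsum_mul_right, mul_comm]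
  rw [h1, sub_mul, one_mul, h2, ← hD.tsum_sub hG]
  rw [← tsum_mul_left]
  apply tsum_congr; intro n
  match n with
  | 0 =>
    show D 0 - 0 = _
    rw [hDdef]
    simp [ascPochhammer_one]
  | (k+1) =>
    show D (k+1) - D k * y = _
    rw [hDdef]
    simp only []
    have h3 : (ascPochhammer ℝ (k+1+1)).eval a
        = (ascPochhammer ℝ (k+1)).eval a * (a + (k+1)) := by
      rw [ascPochhammer_succ_eval]; push_cast; ring
    have : ((k:ℝ)+1) ≠ 0 := by positivity
    rw [h3]
    simp only [Nat.factorial_succ, Nat.cast_mul, Nat.cast_add, Nat.cast_one, pow_succ]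
    field_simp
    ring

lemma poch_tsum_eq (a : ℝ) {x : ℝ} (hx : |x| < 1) :
    (∑' n : ℕ, (ascPochhammer ℝ n).eval a / n.factorial * x ^ n) = (1 - x) ^ (-a) := by
  set S : ℝ → ℝ := fun y => ∑' n : ℕ, (ascPochhammer ℝ n).eval a / n.factorial * y ^ n
    with hSdef
  set F : ℝ → ℝ := fun z => (1-z) ^ a * S z with hFdef
  have hF : ∀ y ∈ Set.Ioo (-1:ℝ) 1, HasDerivAt F 0 y := by
    intro y hy
    obtain ⟨hy1, hy2⟩ := Set.mem_Ioo.mp hy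
    have hylt : |y| < 1 := abs_lt.mpr ⟨hy1, hy2⟩
    have h1y : (0:ℝ) < 1 - y := by linarith
    have h1 : HasDerivAt (fun z : ℝ => (1-z) ^ a) (a * (1-y) ^ (a-1) * (-1)) y := by
      exact (Real.hasDerivAt_rpow_const (Or.inl h1y.ne')).comp y
        ((hasDerivAt_id y).const_sub 1)
    have h2 := poch_hasDerivAt a hylt
    have h3 := h1.mul h2
    refine h3.congr_deriv ?_
    have hode := poch_ode a hylt
    have hpow : (1-y) ^ a = (1-y) ^ (a-1) * (1-y) := by
      rw [← Real.rpow_add_one h1y.ne' (a-1), sub_add_cancel]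
    rw [hpow]
    linear_combination ((1-y) ^ (a-1)) * hode
  have hdiff : DifferentiableOn ℝ F (Set.Ioo (-1:ℝ) 1) :=
    fun y hy => ((hF y hy).differentiableAt).differentiableWithinAt
  have hfd : ∀ y ∈ Set.Ioo (-1:ℝ) 1, fderivWithin ℝ F (Set.Ioo (-1:ℝ) 1) y = 0 := by
    intro y hy
    rw [fderivWithin_of_isOpen isOpen_Ioo hy, (hF y hy).hasFDerivAt.fderiv]
    ext t
    simp
  have hxmem : x ∈ Set.Ioo (-1:ℝ) 1 := Set.mem_Ioo.mpr (abs_lt.mp hx)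
  have h0mem : (0:ℝ) ∈ Set.Ioo (-1:ℝ) 1 := by norm_num
  have hconst : F x = F 0 :=
    (convex_Ioo (-1:ℝ) 1).is_const_of_fderivWithin_eq_zero hdiff hfd hxmem h0mem
  have hS0 : S 0 = 1 := by
    show (∑' n : ℕ, (ascPochhammer ℝ n).eval a / n.factorial * (0:ℝ) ^ n) = 1
    rw [tsum_eq_single 0 (fun n hn => by simp [zero_pow hn])]
    simp
  have hF0 : F 0 = 1 := by
    show (1-(0:ℝ)) ^ a * S 0 = 1
    rw [hS0]
    simp
  have h1x : (0:ℝ) < 1 - x := by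
    have := (abs_lt.mp hx).2; linarith
  have hkey : (1-x) ^ a * S x = 1 := hconst.trans hF0
  have hpos : (0:ℝ) < (1-x) ^ a := Real.rpow_pos_of_pos h1x a
  have hSx : S x = (1-x) ^ (-a) := by
    rw [Real.rpow_neg h1x.le]
    apply mul_left_cancel₀ hpos.ne'
    rw [hkey, mul_inv_cancel₀ hpos.ne']
  exact hSx

lemma poch_hasSum (a : ℝ) {x : ℝ} (hx : |x| < 1) :
    HasSum (fun n : ℕ => (ascPochhammer ℝ n).eval a / n.factorial * x ^ n) ((1 - x) ^ (-a)) := by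
  have := (poch_summable a hx).hasSum
  rwa [poch_tsum_eq a hx] at this



lemma betaComplex_eq_ofReal {p q x : ℝ} (hx : 0 ≤ x) (hx1 : x ≤ 1) :
    (x:ℂ) ^ ((p:ℂ)-1) * (1-(x:ℂ)) ^ ((q:ℂ)-1)
      = ((x ^ (p-1) * (1-x) ^ (q-1) : ℝ) : ℂ) := by
  rw [Complex.ofReal_mul, Complex.ofReal_cpow hx,
    Complex.ofReal_cpow (by linarith : (0:ℝ) ≤ 1 - x)]
  push_cast
  ring

lemma betaReal_intervalIntegrable {p q : ℝ} (hp : 0 < p) (hq : 0 < q) :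
    IntervalIntegrable (fun u : ℝ => u ^ (p-1) * (1-u) ^ (q-1)) volume 0 1 := by
  have hc := Complex.betaIntegral_convergent (u := (p:ℂ)) (v := (q:ℂ))
    (by simpa using hp) (by simpa using hq)
  rw [intervalIntegrable_iff_integrableOn_Ioc_of_le (by norm_num)] at hc ⊢
  refine (hc.re).congr ((ae_restrict_iff' measurableSet_Ioc).mpr (ae_of_all _ fun x hx => ?_))
  obtain ⟨hx0, hx1⟩ := hx
  show RCLike.re ((x:ℂ) ^ ((p:ℂ)-1) * (1-(x:ℂ)) ^ ((q:ℂ)-1)) = _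
  rw [betaComplex_eq_ofReal hx0.le hx1]
  simp

lemma betaReal_eq {p q : ℝ} (hp : 0 < p) (hq : 0 < q) :
    ∫ u in (0:ℝ)..1, u ^ (p-1) * (1-u) ^ (q-1)
      = Real.Gamma p * Real.Gamma q / Real.Gamma (p+q) := by
  have h1 : ((∫ u in (0:ℝ)..1, u ^ (p-1) * (1-u) ^ (q-1) : ℝ) : ℂ)
      = Complex.betaIntegral p q := by
    rw [← intervalIntegral.integral_ofReal]
    rw [Complex.betaIntegral]
    apply intervalIntegral.integral_congr
    intro x hx
    rw [Set.uIcc_of_le (by norm_num : (0:ℝ) ≤ 1)] at hx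
    exact (betaComplex_eq_ofReal hx.1 hx.2).symm
  have h2 := Complex.Gamma_mul_Gamma_eq_betaIntegral
    (s := (p:ℂ)) (t := (q:ℂ)) (by simpa using hp) (by simpa using hq)
  have hG : Complex.Gamma ((p:ℂ)+(q:ℂ)) ≠ 0 := by
    rw [← Complex.ofReal_add, Complex.Gamma_ofReal]
    exact_mod_cast (Real.Gamma_pos_of_pos (by linarith)).ne'
  have h3 : Complex.betaIntegral p q
      = Complex.Gamma p * Complex.Gamma q / Complex.Gamma ((p:ℂ)+(q:ℂ)) := by
    rw [eq_div_iff hG]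
    exact (mul_comm _ _).trans h2.symm
  apply Complex.ofReal_injective
  rw [h1, h3, ← Complex.ofReal_add, Complex.Gamma_ofReal, Complex.Gamma_ofReal,
    Complex.Gamma_ofReal, ← Complex.ofReal_mul, ← Complex.ofReal_div]

lemma asc_pos {x : ℝ} (hx : 0 < x) : ∀ n : ℕ, 0 < (ascPochhammer ℝ n).eval x := by
  intro n
  induction n with
  | zero => simp
  | succ n ih =>
    rw [ascPochhammer_succ_eval]
    have : (0:ℝ) < x + n := by positivity
    positivity

lemma Gamma_poch {x : ℝ} (hx : 0 < x) (n : ℕ) :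
    Real.Gamma (x + n) = (ascPochhammer ℝ n).eval x * Real.Gamma x := by
  induction n with
  | zero => simp
  | succ n ih =>
    have hxn : x + (n:ℝ) ≠ 0 := by positivity
    rw [show x + ((n+1 : ℕ):ℝ) = (x + n) + 1 by push_cast; ring,
      Real.Gamma_add_one hxn, ih, ascPochhammer_succ_eval]
    ring

/-- integrability of `uⁿ · u^(b-1) (1-u)^(b-1)` on `Ioo 0 1`. -/
lemma beta_mono_integrable {b : ℝ} (hb : 0 < b) (n : ℕ) :
    IntegrableOn (fun u : ℝ => u ^ n * (u ^ (b-1) * (1-u) ^ (b-1)))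
      (Set.Ioo (0:ℝ) 1) volume := by
  have h := (betaReal_intervalIntegrable (p := b + n) (q := b) (by positivity) hb)
  rw [intervalIntegrable_iff_integrableOn_Ioc_of_le (by norm_num)] at h
  refine ((h.mono_set Set.Ioo_subset_Ioc_self).congr
    ((ae_restrict_iff' measurableSet_Ioo).mpr (ae_of_all _ fun u hu => ?_)))
  obtain ⟨hu0, hu1⟩ := hu
  show u ^ (b + (n:ℝ) - 1) * (1-u) ^ (b-1) = u ^ n * (u ^ (b-1) * (1-u) ^ (b-1))
  rw [show b + (n:ℝ) - 1 = (n:ℝ) + (b-1) by ring, Real.rpow_add hu0, Real.rpow_natCast]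
  ring

lemma euler_rep (a b z : ℝ) (hb : 0 < b) (hz0 : 0 ≤ z) (hz1 : z < 1) :
    ∑' n : ℕ, ((ascPochhammer ℝ n).eval a * (ascPochhammer ℝ n).eval b /
        ((ascPochhammer ℝ n).eval (2*b) * n.factorial)) * z ^ n
      = (Real.Gamma (2*b) / (Real.Gamma b * Real.Gamma b)) *
        ∫ u in (0:ℝ)..1, u ^ (b-1) * (1-u) ^ (b-1) * (1 - z*u) ^ (-a) := by
  set F : ℕ → ℝ → ℝ := fun n u =>
    ((ascPochhammer ℝ n).eval a / n.factorial * (z*u) ^ n) * (u ^ (b-1) * (1-u) ^ (b-1))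
    with hFdef
  have hGb := Real.Gamma_pos_of_pos hb
  have hG2b := Real.Gamma_pos_of_pos (by linarith : (0:ℝ) < 2*b)
  have hbeta : IntegrableOn (fun u : ℝ => u ^ (b-1) * (1-u) ^ (b-1))
      (Set.Ioo (0:ℝ) 1) volume := by
    have h := betaReal_intervalIntegrable hb hb
    rw [intervalIntegrable_iff_integrableOn_Ioc_of_le (by norm_num)] at h
    exact h.mono_set Set.Ioo_subset_Ioc_self
  -- integrability of each F n
  have hFint : ∀ n, IntegrableOn (F n) (Set.Ioo (0:ℝ) 1) volume := by
    intro n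
    have := ((beta_mono_integrable hb n).const_mul
      ((ascPochhammer ℝ n).eval a / n.factorial * z ^ n))
    refine this.congr (ae_of_all _ fun u => ?_)
    rw [hFdef]
    simp only [mul_pow]
    ring
  -- summability of the integral norms
  have hFsum : Summable (fun n => ∫ u in Set.Ioo (0:ℝ) 1, ‖F n u‖) := by
    set C := ∫ u in Set.Ioo (0:ℝ) 1, u ^ (b-1) * (1-u) ^ (b-1) with hC
    apply Summable.of_nonneg_of_le
      (fun n => integral_nonneg fun u => norm_nonneg _)
      (fun n => ?_)
      (((poch_summable_aux a hz0 hz1).mul_right C))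
    have hle : ∀ u ∈ Set.Ioo (0:ℝ) 1,
        ‖F n u‖ ≤ (|(ascPochhammer ℝ n).eval a| * z ^ n / n.factorial)
          * (u ^ (b-1) * (1-u) ^ (b-1)) := by
      intro u hu
      obtain ⟨hu0, hu1⟩ := hu
      have h1u : (0:ℝ) < 1 - u := by linarith
      have e1 : ‖F n u‖ = (|(ascPochhammer ℝ n).eval a| / n.factorial * (z*u) ^ n)
          * (u ^ (b-1) * (1-u) ^ (b-1)) := by
        rw [hFdef]
        simp only [norm_mul, Real.norm_eq_abs, abs_div, Nat.abs_cast, abs_pow]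
        rw [abs_of_nonneg (mul_nonneg hz0 hu0.le),
          abs_of_nonneg (Real.rpow_nonneg hu0.le _),
          abs_of_nonneg (Real.rpow_nonneg h1u.le _)]
      rw [e1]
      apply mul_le_mul_of_nonneg_right _ (by positivity)
      have hzu : (z*u) ^ n ≤ z ^ n := by
        rw [mul_pow]
        nth_rewrite 2 [← mul_one (z ^ n)]
        exact mul_le_mul_of_nonneg_left (pow_le_one₀ hu0.le hu1.le) (by positivity)
      calc |(ascPochhammer ℝ n).eval a| / n.factorial * (z*u) ^ n
          ≤ |(ascPochhammer ℝ n).eval a| / n.factorial * z ^ n :=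
            mul_le_mul_of_nonneg_left hzu (by positivity)
        _ = |(ascPochhammer ℝ n).eval a| * z ^ n / n.factorial := by ring
    calc (∫ u in Set.Ioo (0:ℝ) 1, ‖F n u‖)
        ≤ ∫ u in Set.Ioo (0:ℝ) 1,
            (|(ascPochhammer ℝ n).eval a| * z ^ n / n.factorial)
              * (u ^ (b-1) * (1-u) ^ (b-1)) :=
          setIntegral_mono_on ((hFint n).norm) (hbeta.const_mul _)
            measurableSet_Ioo hle
      _ = |(ascPochhammer ℝ n).eval a| * z ^ n / n.factorial * C := by
          rw [MeasureTheory.integral_const_mul]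
  -- pointwise sum of the series
  have hpt : ∀ u ∈ Set.Ioo (0:ℝ) 1,
      (∑' n, F n u) = u ^ (b-1) * (1-u) ^ (b-1) * (1-z*u) ^ (-a) := by
    intro u hu
    obtain ⟨hu0, hu1⟩ := hu
    have hzu : |z*u| < 1 := by
      rw [abs_of_nonneg (by positivity)]
      nlinarith
    have hs := (poch_hasSum a hzu).tsum_eq
    rw [hFdef]
    rw [tsum_mul_right, hs]
    ring
  -- swap sum and integral
  have hswap : (∫ u in Set.Ioo (0:ℝ) 1, u ^ (b-1) * (1-u) ^ (b-1) * (1-z*u) ^ (-a))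
      = ∑' n, ∫ u in Set.Ioo (0:ℝ) 1, F n u := by
    calc (∫ u in Set.Ioo (0:ℝ) 1, u ^ (b-1) * (1-u) ^ (b-1) * (1-z*u) ^ (-a))
        = ∫ u in Set.Ioo (0:ℝ) 1, ∑' n, F n u :=
          setIntegral_congr_fun measurableSet_Ioo (fun u hu => (hpt u hu).symm)
      _ = ∑' n, ∫ u in Set.Ioo (0:ℝ) 1, F n u :=
          (integral_tsum_of_summable_integral_norm hFint hFsum).symm
  -- each term
  have hterm : ∀ n : ℕ, (∫ u in Set.Ioo (0:ℝ) 1, F n u)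
      = ((ascPochhammer ℝ n).eval a / n.factorial * z ^ n) *
        (Real.Gamma (b+n) * Real.Gamma b / Real.Gamma (b+n+b)) := by
    intro n
    have e2 : (∫ u in Set.Ioo (0:ℝ) 1, u ^ n * (u ^ (b-1) * (1-u) ^ (b-1)))
        = Real.Gamma (b+n) * Real.Gamma b / Real.Gamma (b+n+b) := by
      rw [← betaReal_eq (by positivity : (0:ℝ) < b + n) hb,
        intervalIntegral.integral_of_le (by norm_num : (0:ℝ) ≤ 1),
        integral_Ioc_eq_integral_Ioo]
      apply setIntegral_congr_fun measurableSet_Ioo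
      intro u hu
      obtain ⟨hu0, hu1⟩ := hu
      simp only
      rw [show b + (n:ℝ) - 1 = (n:ℝ) + (b - 1) by ring, Real.rpow_add hu0,
        Real.rpow_natCast]
      ring
    have e3 : ∀ u : ℝ, F n u = ((ascPochhammer ℝ n).eval a / n.factorial * z ^ n)
        * (u ^ n * (u ^ (b-1) * (1-u) ^ (b-1))) := by
      intro u
      rw [hFdef]
      simp only [mul_pow]
      ring
    calc (∫ u in Set.Ioo (0:ℝ) 1, F n u)
        = ∫ u in Set.Ioo (0:ℝ) 1, ((ascPochhammer ℝ n).eval a / n.factorial * z ^ n)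
            * (u ^ n * (u ^ (b-1) * (1-u) ^ (b-1))) :=
          setIntegral_congr_fun measurableSet_Ioo (fun u _ => e3 u)
      _ = ((ascPochhammer ℝ n).eval a / n.factorial * z ^ n)
            * ∫ u in Set.Ioo (0:ℝ) 1, u ^ n * (u ^ (b-1) * (1-u) ^ (b-1)) := by
          rw [MeasureTheory.integral_const_mul]
      _ = _ := by rw [e2]
  -- final assembly
  rw [intervalIntegral.integral_of_le (by norm_num : (0:ℝ) ≤ 1),
    integral_Ioc_eq_integral_Ioo, hswap, ← tsum_mul_left]
  apply tsum_congr
  intro n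
  rw [hterm n]
  have h1 : Real.Gamma (b + n) = (ascPochhammer ℝ n).eval b * Real.Gamma b :=
    Gamma_poch hb n
  have h2 : Real.Gamma (b + n + b)
      = (ascPochhammer ℝ n).eval (2*b) * Real.Gamma (2*b) := by
    rw [show b + (n:ℝ) + b = 2*b + n by ring]
    exact Gamma_poch (by linarith) n
  have hposn := asc_pos (by linarith : (0:ℝ) < 2*b) n
  have hfac : (0:ℝ) < (n.factorial : ℝ) := by exact_mod_cast n.factorial_pos
  rw [h1, h2]
  field_simp

theorem stmt4 (a b z : ℝ) (hb : 0 < b) (hz0 : 0 ≤ z) (hz1 : z < 1) :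
    ∑' n : ℕ,
        ((ascPochhammer ℝ n).eval a * (ascPochhammer ℝ n).eval b /
          ((ascPochhammer ℝ n).eval (2 * b) * n.factorial)) * z ^ n
      = (Real.Gamma (2 * b) / (2 ^ (2 * b - 1) * Real.Gamma b ^ 2)) *
          (1 - z / 2) ^ (-a) *
          ∫ t in (-1 : ℝ)..1, (1 - t ^ 2) ^ (b - 1) * (1 - (z / (2 - z)) * t) ^ (-a) := by
  have h2z : (0:ℝ) < 2 - z := by linarith
  set w : ℝ := z / (2 - z) with hwdef
  have hw0 : 0 ≤ w := div_nonneg hz0 h2z.le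
  have hw1 : w < 1 := by
    rw [hwdef, div_lt_one h2z]; linarith
  have hz2 : (0:ℝ) < 1 - z/2 := by linarith
  set f : ℝ → ℝ := fun t => (1 - t ^ 2) ^ (b - 1) * (1 - w * t) ^ (-a) with hfdef
  set g : ℝ → ℝ := fun u => u ^ (b-1) * (1-u) ^ (b-1) * (1 - z*u) ^ (-a) with hgdef
  -- step 1: substitution t = -2u+1
  have e1 : ∫ t in (-1:ℝ)..1, f t = 2 * ∫ u in (0:ℝ)..1, f (-2*u + 1) := by
    rw [intervalIntegral.integral_comp_mul_add f (by norm_num : (-2:ℝ) ≠ 0) 1]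
    norm_num
    rw [intervalIntegral.integral_symm]
    ring
  -- step 2: pointwise identity
  have e2 : ∀ u ∈ Set.uIcc (0:ℝ) 1,
      (1 - z/2) ^ (-a) * f (-2*u + 1)
        = 2 ^ (2*b-2) * ((1-u) ^ (b-1) * (1-(1-u)) ^ (b-1) * (1 - z*(1-u)) ^ (-a)) := by
    intro u hu
    rw [Set.uIcc_of_le (by norm_num : (0:ℝ) ≤ 1)] at hu
    obtain ⟨hu0, hu1⟩ := hu
    have h1u : (0:ℝ) ≤ 1 - u := by linarith
    have hb1 : (0:ℝ) < 1 - w * (-2*u+1) := by nlinarith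
    have hfact : 1 - (-2*u+1) ^ 2 = 4 * ((1-u) * u) := by ring
    have hrw1 : (1 - (-2*u+1) ^ 2) ^ (b-1) = 4 ^ (b-1) * ((1-u) ^ (b-1) * u ^ (b-1)) := by
      rw [hfact, Real.mul_rpow (by norm_num) (by positivity), Real.mul_rpow h1u hu0]
    have hrw2 : (1 - z/2) ^ (-a) * (1 - w * (-2*u+1)) ^ (-a)
        = (1 - z*(1-u)) ^ (-a) := by
      rw [← Real.mul_rpow hz2.le hb1.le]
      congr 1
      rw [hwdef]
      field_simp
      ring
    have h4 : (4:ℝ) ^ (b-1) = 2 ^ (2*b-2) := by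
      rw [show (2:ℝ)*b-2 = (2:ℝ)*(b-1) by ring, Real.rpow_mul (by norm_num : (0:ℝ) ≤ 2),
        show ((2:ℝ) ^ (2:ℝ)) = 4 by
          rw [show (2:ℝ) = ((2:ℕ):ℝ) from by norm_num, Real.rpow_natCast]; norm_num]
    rw [hfdef]
    show (1 - z/2) ^ (-a) * ((1 - (-2*u+1) ^ 2) ^ (b-1) * (1 - w * (-2*u+1)) ^ (-a)) = _
    rw [hrw1, h4, show 1 - (1-u) = u by ring]
    linear_combination (2 ^ (2*b-2) * ((1-u) ^ (b-1) * u ^ (b-1))) * hrw2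
  -- step 3: reflection u ↦ 1 - u
  have e3 : (∫ u in (0:ℝ)..1, (1-u) ^ (b-1) * (1-(1-u)) ^ (b-1) * (1 - z*(1-u)) ^ (-a))
      = ∫ u in (0:ℝ)..1, g u := by
    have h := intervalIntegral.integral_comp_sub_left (a := (0:ℝ)) (b := 1) g 1
    rw [show (1:ℝ)-1 = 0 by norm_num, show (1:ℝ)-(0:ℝ) = 1 by norm_num] at h
    rw [← h]
  -- combine
  have hchange : (1 - z/2) ^ (-a) * ∫ t in (-1:ℝ)..1, f t
      = 2 ^ (2*b-1) * ∫ u in (0:ℝ)..1, g u := by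
    rw [e1, show (1 - z/2) ^ (-a) * (2 * ∫ u in (0:ℝ)..1, f (-2*u + 1))
        = 2 * ((1 - z/2) ^ (-a) * ∫ u in (0:ℝ)..1, f (-2*u + 1)) by ring,
      ← intervalIntegral.integral_const_mul,
      intervalIntegral.integral_congr e2,
      intervalIntegral.integral_const_mul, e3]
    rw [show (2:ℝ) ^ (2*b-1) = 2 * 2 ^ (2*b-2) by
      rw [show (2:ℝ)*b-1 = 1 + (2*b-2) by ring, Real.rpow_add (by norm_num), Real.rpow_one]]
    ring
  rw [euler_rep a b z hb hz0 hz1]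
  rw [mul_assoc, hchange]
  have hpow2 : (0:ℝ) < 2 ^ (2*b-1) := Real.rpow_pos_of_pos (by norm_num) _
  have hGb := Real.Gamma_pos_of_pos hb
  rw [show Real.Gamma b ^ 2 = Real.Gamma b * Real.Gamma b by ring]
  field_simp
  ring
  simp only [hgdef]
  apply intervalIntegral.integral_congr
  intro u _
  ring
end
end

section
/- Let p ≥ 2 and j ∈ ℕ. For every x ∈ EuclideanSpace ℝ (Fin p), ∫_{S^{p-1}} ⟨x,t⟩^{2j} dσ(t) = 2π^{(p-1)/2} (Γ(j + 1/2) / Γ(j + p/2)) ‖x‖^{2j}. -/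
open MeasureTheory Metric
open Set Real
open scoped RealInnerProductSpace

noncomputable section

lemma intB (j : ℕ) : ∫ x : ℝ, x ^ (2 * j) * Real.exp (-x ^ 2)
    = Real.Gamma ((j : ℝ) + 1 / 2) := by
  have h1 : ∫ x : ℝ, x ^ (2 * j) * Real.exp (-x ^ 2)
      = ∫ x : ℝ, (fun u : ℝ ↦ u ^ (2 * j) * Real.exp (-u ^ 2)) |x| := by
    refine integral_congr_ae (Filter.Eventually.of_forall fun x ↦ ?_)
    simp only [(even_two_mul j).pow_abs, sq_abs]
  rw [h1, integral_comp_abs (f := fun u : ℝ ↦ u ^ (2 * j) * Real.exp (-u ^ 2))]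
  have h2 : ∫ x in Ioi (0:ℝ), x ^ (2 * j) * Real.exp (-x ^ 2)
      = ∫ x in Ioi (0:ℝ), x ^ ((2 * j : ℕ) : ℝ) * Real.exp (-x ^ (2:ℝ)) := by
    refine setIntegral_congr_fun measurableSet_Ioi fun x hx ↦ ?_
    rw [Real.rpow_natCast, ← Real.rpow_natCast x 2]
    norm_num
  rw [h2, integral_rpow_mul_exp_neg_rpow two_pos (lt_of_lt_of_le neg_one_lt_zero (Nat.cast_nonneg _))]
  have : (((2 * j : ℕ) : ℝ) + 1) / 2 = (j : ℝ) + 1 / 2 := by push_cast; ring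
  rw [this]; ring

lemma intC (p : ℕ) (hp : 1 ≤ p) (j : ℕ) :
    ∫ y in Ioi (0:ℝ), y ^ (p - 1) * (y ^ (2 * j) * Real.exp (-y ^ 2))
      = 1 / 2 * Real.Gamma ((j : ℝ) + p / 2) := by
  have h2 : ∫ y in Ioi (0:ℝ), y ^ (p - 1) * (y ^ (2 * j) * Real.exp (-y ^ 2))
      = ∫ y in Ioi (0:ℝ), y ^ ((p - 1 + 2 * j : ℕ) : ℝ) * Real.exp (-y ^ (2:ℝ)) := by
    refine setIntegral_congr_fun measurableSet_Ioi fun x hx ↦ ?_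
    rw [Real.rpow_natCast, ← Real.rpow_natCast x 2, pow_add, mul_assoc]
    norm_num
  rw [h2, integral_rpow_mul_exp_neg_rpow two_pos (lt_of_lt_of_le neg_one_lt_zero (Nat.cast_nonneg _))]
  congr 2
  push_cast [Nat.cast_sub hp]
  ring

lemma intD (n : ℕ) (h : ℝ → ℝ) :
    ∫ r : Ioi (0:ℝ), h r ∂(Measure.volumeIoiPow n)
      = ∫ y in Ioi (0:ℝ), y ^ n * h y := by
  simp only [Measure.volumeIoiPow, ENNReal.ofReal]
  rw [integral_withDensity_eq_integral_smul
      ((measurable_subtype_coe.pow_const _).real_toNNReal),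
    integral_subtype_comap measurableSet_Ioi fun a ↦ Real.toNNReal (a ^ n) • h a,
    setIntegral_congr_fun measurableSet_Ioi fun x hx ↦ ?_]
  rw [NNReal.smul_def, Real.coe_toNNReal _ (pow_nonneg hx.out.le _), smul_eq_mul]

lemma intA (p : ℕ) [NeZero p] (j : ℕ) :
    ∫ t : EuclideanSpace ℝ (Fin p), (t 0) ^ (2 * j) * Real.exp (-‖t‖ ^ 2)
      = Real.Gamma ((j : ℝ) + 1 / 2) * Real.sqrt π ^ (p - 1) := by
  have key := ((EuclideanSpace.volume_preserving_symm_measurableEquiv_toLp (Fin p)).symm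
      (MeasurableEquiv.toLp 2 (Fin p → ℝ)).symm).integral_comp
    ((MeasurableEquiv.toLp 2 (Fin p → ℝ)).measurableEmbedding)
    (fun t : EuclideanSpace ℝ (Fin p) ↦ (t 0) ^ (2 * j) * Real.exp (-‖t‖ ^ 2))
  simp only [MeasurableEquiv.symm_symm] at key
  rw [← key]
  have h1 : ∀ y : Fin p → ℝ,
      ((MeasurableEquiv.toLp 2 (Fin p → ℝ)) y 0) ^ (2 * j)
        * Real.exp (-‖(MeasurableEquiv.toLp 2 (Fin p → ℝ)) y‖ ^ 2)
      = ∏ i : Fin p, (fun u : ℝ ↦ (if i = 0 then u ^ (2 * j) else 1) * Real.exp (-u ^ 2)) (y i) := by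
    intro y
    have hn : ‖(MeasurableEquiv.toLp 2 (Fin p → ℝ)) y‖ ^ 2 = ∑ i, (y i) ^ 2 := by
      rw [EuclideanSpace.norm_eq, Real.sq_sqrt (by positivity)]
      simp [MeasurableEquiv.coe_toLp, Real.norm_eq_abs, sq_abs]
    rw [hn]
    rw [Finset.prod_mul_distrib]
    have h0 : ∏ i : Fin p, (if i = 0 then (y i) ^ (2 * j) else 1) = (y 0) ^ (2 * j) := by
      simp
    rw [h0, ← Real.exp_sum]
    simp [MeasurableEquiv.coe_toLp, Finset.sum_neg_distrib]
  rw [integral_congr_ae (Filter.Eventually.of_forall h1),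
    MeasureTheory.integral_fintype_prod_volume_eq_prod (ι := Fin p)
      (f := fun i (u : ℝ) ↦ (if i = 0 then u ^ (2 * j) else 1) * Real.exp (-u ^ 2))]
  rw [← Finset.mul_prod_erase Finset.univ _ (Finset.mem_univ (0 : Fin p))]
  have h2 : (∫ u : ℝ, (if (0 : Fin p) = 0 then u ^ (2 * j) else 1) * Real.exp (-u ^ 2))
      = Real.Gamma ((j : ℝ) + 1 / 2) := by
    simp only [if_pos rfl]
    exact intB j
  have h3 : ∀ i ∈ Finset.univ.erase (0 : Fin p),
      (∫ u : ℝ, (if i = 0 then u ^ (2 * j) else 1) * Real.exp (-u ^ 2)) = Real.sqrt π := by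
    intro i hi
    rw [Finset.mem_erase] at hi
    simp only [if_neg hi.1, one_mul]
    have := integral_gaussian (1 : ℝ)
    simpa using this
  rw [h2, Finset.prod_congr rfl h3, Finset.prod_const, Finset.card_erase_of_mem (Finset.mem_univ _),
    Finset.card_univ, Fintype.card_fin]

lemma sphereE (p : ℕ) (hp : 2 ≤ p) (j : ℕ) (e : EuclideanSpace ℝ (Fin p)) (he : ‖e‖ = 1) :
    (∫ s : sphere (0 : EuclideanSpace ℝ (Fin p)) 1,
        ⟪e, (s : EuclideanSpace ℝ (Fin p))⟫ ^ (2 * j)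
        ∂(volume : Measure (EuclideanSpace ℝ (Fin p))).toSphere)
      = 2 * Real.pi ^ (((p : ℝ) - 1) / 2) *
          (Real.Gamma ((j : ℝ) + 1 / 2) / Real.Gamma ((j : ℝ) + p / 2)) := by
  haveI : NeZero p := ⟨by omega⟩
  haveI : Nontrivial (EuclideanSpace ℝ (Fin p)) := by
    apply Module.nontrivial_of_finrank_pos (R := ℝ)
    rw [finrank_euclideanSpace_fin]; omega
  set e₀ : EuclideanSpace ℝ (Fin p) := EuclideanSpace.single 0 1 with he₀
  have hne : ‖e₀‖ = ‖e‖ := by rw [he, he₀, EuclideanSpace.norm_single]; norm_num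
  set R := Submodule.reflection (ℝ ∙ (e₀ - e))ᗮ with hRdef
  have hR : R e₀ = e := Submodule.reflection_sub hne
  -- Gaussian integral, rotation-invariance computation
  have hG1 : ∫ t : EuclideanSpace ℝ (Fin p), ⟪e, t⟫ ^ (2 * j) * Real.exp (-‖t‖ ^ 2)
      = Real.Gamma ((j : ℝ) + 1 / 2) * Real.sqrt π ^ (p - 1) := by
    rw [← R.measurePreserving.integral_comp R.toHomeomorph.measurableEmbedding
      (fun t ↦ ⟪e, t⟫ ^ (2 * j) * Real.exp (-‖t‖ ^ 2))]
    have : ∀ u : EuclideanSpace ℝ (Fin p), ⟪e, R u⟫ ^ (2 * j) * Real.exp (-‖R u‖ ^ 2)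
        = (u 0) ^ (2 * j) * Real.exp (-‖u‖ ^ 2) := by
      intro u
      rw [← hR, LinearIsometryEquiv.inner_map_map, LinearIsometryEquiv.norm_map, he₀,
        EuclideanSpace.inner_single_left]
      norm_num
    rw [integral_congr_ae (Filter.Eventually.of_forall this)]
    exact intA p j
  -- polar coordinates computation
  have hG2 : ∫ t : EuclideanSpace ℝ (Fin p), ⟪e, t⟫ ^ (2 * j) * Real.exp (-‖t‖ ^ 2)
      = (∫ s : sphere (0 : EuclideanSpace ℝ (Fin p)) 1, ⟪e, (s : EuclideanSpace ℝ (Fin p))⟫ ^ (2 * j)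
          ∂(volume : Measure (EuclideanSpace ℝ (Fin p))).toSphere)
        * (1 / 2 * Real.Gamma ((j : ℝ) + p / 2)) := by
    set F : sphere (0 : EuclideanSpace ℝ (Fin p)) 1 × Set.Ioi (0 : ℝ) → ℝ :=
      fun z ↦ ⟪e, (z.1 : EuclideanSpace ℝ (Fin p))⟫ ^ (2 * j)
        * ((z.2 : ℝ) ^ (2 * j) * Real.exp (-(z.2 : ℝ) ^ 2))
      with hF
    have key := (Measure.measurePreserving_homeomorphUnitSphereProd
      (volume : Measure (EuclideanSpace ℝ (Fin p)))).integral_comp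
      (Homeomorph.measurableEmbedding _) F
    have h0 : ∀ x : ({0}ᶜ : Set (EuclideanSpace ℝ (Fin p))),
        F (homeomorphUnitSphereProd (EuclideanSpace ℝ (Fin p)) x)
        = ⟪e, (x : EuclideanSpace ℝ (Fin p))⟫ ^ (2 * j)
            * Real.exp (-‖(x : EuclideanSpace ℝ (Fin p))‖ ^ 2) := by
      intro x
      have hnx : ‖(x : EuclideanSpace ℝ (Fin p))‖ ≠ 0 := norm_ne_zero_iff.2 x.2
      simp only [hF, homeomorphUnitSphereProd_apply_fst_coe, homeomorphUnitSphereProd_apply_snd_coe]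
      rw [real_inner_smul_right, mul_pow, inv_pow]
      field_simp
    rw [integral_congr_ae (Filter.Eventually.of_forall h0),
      integral_subtype_comap (measurableSet_singleton (0 : EuclideanSpace ℝ (Fin p))).compl
        (fun t : EuclideanSpace ℝ (Fin p) ↦ ⟪e, t⟫ ^ (2 * j) * Real.exp (-‖t‖ ^ 2)),
      MeasureTheory.restrict_compl_singleton _] at key
    rw [key, finrank_euclideanSpace_fin, hF]
    rw [integral_prod_mul (μ := (volume : Measure (EuclideanSpace ℝ (Fin p))).toSphere)
      (ν := Measure.volumeIoiPow (p - 1))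
      (f := fun s : sphere (0 : EuclideanSpace ℝ (Fin p)) 1 ↦
        ⟪e, (s : EuclideanSpace ℝ (Fin p))⟫ ^ (2 * j))
      (g := fun r : Set.Ioi (0:ℝ) ↦ (r : ℝ) ^ (2 * j) * Real.exp (-(r : ℝ) ^ 2))]
    rw [intD (p - 1) (fun y ↦ y ^ (2 * j) * Real.exp (-y ^ 2)), intC p (by omega) j]
  -- combine
  have hΓ : 0 < Real.Gamma ((j : ℝ) + p / 2) := by
    apply Real.Gamma_pos_of_pos
    positivity
  have hsq : Real.sqrt π ^ (p - 1) = Real.pi ^ (((p : ℝ) - 1) / 2) := by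
    rw [Real.sqrt_eq_rpow, ← Real.rpow_natCast (π ^ ((1:ℝ)/2)) (p - 1),
      ← Real.rpow_mul Real.pi_nonneg]
    congr 1
    rw [Nat.cast_sub (by omega : 1 ≤ p)]
    push_cast; ring
  have := hG1.symm.trans hG2
  field_simp at this ⊢
  rw [← hsq]
  linarith [this]

theorem stmt5 (p : ℕ) (hp : 2 ≤ p) (j : ℕ) (x : EuclideanSpace ℝ (Fin p)) :
    (∫ t : sphere (0 : EuclideanSpace ℝ (Fin p)) 1,
        ⟪x, (t : EuclideanSpace ℝ (Fin p))⟫ ^ (2 * j)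
        ∂(volume : Measure (EuclideanSpace ℝ (Fin p))).toSphere)
      = 2 * Real.pi ^ (((p : ℝ) - 1) / 2) *
          (Real.Gamma ((j : ℝ) + 1 / 2) / Real.Gamma ((j : ℝ) + p / 2)) * ‖x‖ ^ (2 * j) := by
  haveI : NeZero p := ⟨by omega⟩
  rcases eq_or_ne x 0 with rfl | hx
  · rcases Nat.eq_zero_or_pos j with rfl | hj
    · have he : ‖(EuclideanSpace.single (0 : Fin p) (1:ℝ) : EuclideanSpace ℝ (Fin p))‖ = 1 := by
        rw [EuclideanSpace.norm_single]; norm_num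
      have h := sphereE p hp 0 (EuclideanSpace.single (0 : Fin p) (1:ℝ)) he
      simpa using h
    · have hz : ∀ t : sphere (0 : EuclideanSpace ℝ (Fin p)) 1,
          ⟪(0 : EuclideanSpace ℝ (Fin p)), (t : EuclideanSpace ℝ (Fin p))⟫ ^ (2 * j) = 0 := by
        intro t
        rw [inner_zero_left, zero_pow (by omega)]
      rw [integral_congr_ae (Filter.Eventually.of_forall hz), integral_zero,
        norm_zero, zero_pow (by omega), mul_zero]
  · have hnx : ‖x‖ ≠ 0 := norm_ne_zero_iff.2 hx
    have he : ‖(‖x‖⁻¹ • x : EuclideanSpace ℝ (Fin p))‖ = 1 := by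
      rw [norm_smul, norm_inv, norm_norm, inv_mul_cancel₀ hnx]
    have h := sphereE p hp j (‖x‖⁻¹ • x) he
    have hsplit : ∀ t : sphere (0 : EuclideanSpace ℝ (Fin p)) 1,
        ⟪x, (t : EuclideanSpace ℝ (Fin p))⟫ ^ (2 * j)
          = ‖x‖ ^ (2 * j) * ⟪(‖x‖⁻¹ • x : EuclideanSpace ℝ (Fin p)),
              (t : EuclideanSpace ℝ (Fin p))⟫ ^ (2 * j) := by
      intro t
      rw [real_inner_smul_left, mul_pow, ← mul_assoc, ← mul_pow, mul_inv_cancel₀ hnx, one_pow,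
        one_mul]
    rw [integral_congr_ae (Filter.Eventually.of_forall hsplit), integral_const_mul, h]
    ring
end
end

section
/- Let p ≥ 2, k ∈ ℕ, c ∈ ℂ, and x ∈ EuclideanSpace ℝ (Fin p). Then ∫_{S^{p-1}} (⟨x,t⟩ + c)^k dσ(t) = Σ_{j=0}^{⌊k/2⌋} C(k, 2j) · 2π^{(p-1)/2} (Γ(j + 1/2)/Γ(p/2 + j)) · ‖x‖^{2j} · c^{k-2j}, where C(k,·) is the binomial coefficient. -/
open MeasureTheory Metric
open scoped RealInnerProductSpace

noncomputable section

section auxiliary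
open Set Real
open scoped ENNReal NNReal
set_option maxRecDepth 8000


lemma radial (m : ℕ) : ∫ r in Ioi (0:ℝ), r ^ m * Real.exp (-r^2)
    = Real.Gamma ((m+1)/2) / 2 := by
  have h : ∫ r in Ioi (0:ℝ), r ^ m * Real.exp (-r^2)
      = ∫ r in Ioi (0:ℝ), r ^ (m:ℝ) * Real.exp (-r ^ (2:ℝ)) := by
    refine setIntegral_congr_fun measurableSet_Ioi (fun r hr => ?_)
    rw [Real.rpow_natCast, show ((2:ℝ)) = ((2:ℕ):ℝ) by norm_num, Real.rpow_natCast]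
  rw [h, integral_rpow_mul_exp_neg_rpow two_pos
    (by exact neg_one_lt_zero.trans_le (Nat.cast_nonneg m))]
  ring

lemma intOn_pow_gauss (m : ℕ) :
    IntegrableOn (fun x : ℝ => x ^ m * Real.exp (-x^2)) (Ioi 0) := by
  have h := integrableOn_rpow_mul_exp_neg_mul_sq (b := 1) one_pos (s := m)
    (neg_one_lt_zero.trans_le (Nat.cast_nonneg m))
  refine (h.congr_fun (fun x hx => ?_) measurableSet_Ioi)
  dsimp only
  rw [Real.rpow_natCast, neg_one_mul]

lemma integrable_pow_gauss (m : ℕ) :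
    Integrable (fun x : ℝ => x ^ m * Real.exp (-x^2)) := by
  rw [← integrableOn_univ, ← @Iio_union_Ici _ _ (0 : ℝ), integrableOn_union,
    integrableOn_Ici_iff_integrableOn_Ioi]
  refine ⟨?_, intOn_pow_gauss m⟩
  rw [← (Measure.measurePreserving_neg (volume : Measure ℝ)).integrableOn_comp_preimage
      (Homeomorph.neg ℝ).measurableEmbedding]
  simp only [Function.comp_def, neg_sq, neg_preimage, neg_Iio, neg_neg, neg_zero]
  have h2 : IntegrableOn (fun x:ℝ => (-1:ℝ)^m * (x^m * Real.exp (-x^2))) (Ioi 0) :=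
    (intOn_pow_gauss m).const_mul _
  exact h2.congr_fun (fun x hx => by rw [neg_pow]; ring) measurableSet_Ioi

lemma gauss_moment (m : ℕ) : ∫ x : ℝ, x ^ m * Real.exp (-x^2)
    = (1 + (-1:ℝ)^m) * (Real.Gamma ((m+1)/2) / 2) := by
  have hIic : IntegrableOn (fun x : ℝ => x ^ m * Real.exp (-x^2)) (Iic 0) :=
    ((integrable_pow_gauss m).integrableOn)
  rw [← intervalIntegral.integral_Iic_add_Ioi hIic (intOn_pow_gauss m)]
  have h1 : ∫ x in Ioi (0:ℝ), (-x) ^ m * Real.exp (-(-x)^2)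
      = ∫ x in Iic (0:ℝ), x ^ m * Real.exp (-x^2) :=
    (integral_comp_neg_Ioi 0 fun x => x ^ m * Real.exp (-x^2)).trans (by rw [neg_zero])
  rw [← h1]
  have h2 : ∫ x in Ioi (0:ℝ), (-x) ^ m * Real.exp (-(-x)^2)
      = ∫ x in Ioi (0:ℝ), (-1:ℝ)^m * (x ^ m * Real.exp (-x^2)) := by
    refine setIntegral_congr_fun measurableSet_Ioi (fun x hx => ?_)
    rw [neg_pow, neg_sq]; ring
  rw [h2, integral_const_mul, radial m]
  ring


lemma gaussE (p : ℕ) (hp : 2 ≤ p) (u : EuclideanSpace ℝ (Fin p)) (hu : ‖u‖ = 1) (n : ℕ) :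
    ∫ y : EuclideanSpace ℝ (Fin p), ⟪u, y⟫ ^ n * Real.exp (-‖y‖^2)
    = (∫ x : ℝ, x ^ n * Real.exp (-x^2)) * (Real.sqrt π) ^ (p-1) := by
  haveI : NeZero p := ⟨by omega⟩
  -- orthonormal basis with b 0 = u
  have hcard : Module.finrank ℝ (EuclideanSpace ℝ (Fin p)) = Fintype.card (Fin p) := by
    simp [finrank_euclideanSpace_fin]
  have hv : Orthonormal ℝ (({0} : Set (Fin p)).restrict (fun _ => u)) := by
    refine ⟨fun i => hu, fun i j hij => absurd (Subtype.ext ?_) hij⟩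
    have h1 : (i : Fin p) = 0 := i.2
    have h2 : (j : Fin p) = 0 := j.2
    rw [h1, h2]
  obtain ⟨b, hb⟩ := hv.exists_orthonormalBasis_extension_of_card_eq hcard
  have hb0 : b 0 = u := hb 0 rfl
  -- step 1: replace inner by coordinate
  have h1 : ∫ y : EuclideanSpace ℝ (Fin p), ⟪u, y⟫ ^ n * Real.exp (-‖y‖^2)
      = ∫ z : EuclideanSpace ℝ (Fin p), (z 0) ^ n * Real.exp (-‖z‖^2) := by
    rw [← (b.measurePreserving_repr).integral_comp
      (b.repr.toHomeomorph.measurableEmbedding)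
      (fun z : EuclideanSpace ℝ (Fin p) => (z 0) ^ n * Real.exp (-‖z‖^2))]
    refine integral_congr_ae (Filter.Eventually.of_forall fun y => ?_)
    dsimp only
    rw [b.repr_apply_apply, hb0, b.repr.norm_map]
  rw [h1]
  -- step 2: to pi measure
  have h2 : ∫ z : EuclideanSpace ℝ (Fin p), (z 0) ^ n * Real.exp (-‖z‖^2)
      = ∫ z : Fin p → ℝ, (z 0) ^ n * Real.exp (- ∑ i, (z i)^2) := by
    rw [← ((EuclideanSpace.volume_preserving_symm_measurableEquiv_toLp (Fin p)).symm).integral_comp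
      (MeasurableEquiv.toLp 2 (Fin p → ℝ)).measurableEmbedding
      (fun z : EuclideanSpace ℝ (Fin p) => (z 0) ^ n * Real.exp (-‖z‖^2))]
    refine integral_congr_ae (Filter.Eventually.of_forall fun z => ?_)
    dsimp only
    have hz : ∀ i, ((MeasurableEquiv.toLp 2 (Fin p → ℝ)) z) i = z i := fun i => rfl
    rw [EuclideanSpace.norm_eq, Real.sq_sqrt (by positivity)]
    simp [hz, Real.norm_eq_abs, sq_abs]
  rw [h2]
  -- step 3: product structure
  classical
  set h : Fin p → ℝ → ℝ := fun i => if i = 0 then (fun s => s ^ n * Real.exp (-s^2))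
    else (fun s => Real.exp (-s^2)) with hh
  have h3 : ∫ z : Fin p → ℝ, (z 0) ^ n * Real.exp (- ∑ i, (z i)^2)
      = ∫ z : Fin p → ℝ, ∏ i, h i (z i) := by
    refine integral_congr_ae (Filter.Eventually.of_forall fun z => ?_)
    dsimp only
    rw [show -∑ i, (z i)^2 = ∑ i, -(z i)^2 by simp, Real.exp_sum,
      ← Finset.mul_prod_erase Finset.univ _ (Finset.mem_univ 0),
      ← Finset.mul_prod_erase Finset.univ _ (Finset.mem_univ 0)]
    have e0 : h 0 (z 0) = (z 0) ^ n * Real.exp (-(z 0)^2) := by simp [hh]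
    have erest : ∀ i ∈ Finset.univ.erase 0, h i (z i) = Real.exp (-(z i)^2) := by
      intro i hi
      simp [hh, Finset.ne_of_mem_erase hi]
    rw [e0, Finset.prod_congr rfl erest, mul_assoc]
  rw [h3, volume_pi, integral_fintype_prod_eq_prod h,
    ← Finset.mul_prod_erase Finset.univ _ (Finset.mem_univ 0)]
  have e0 : (∫ s : ℝ, h 0 s) = ∫ x : ℝ, x ^ n * Real.exp (-x^2) := by simp [hh]
  have erest : ∀ i ∈ Finset.univ.erase 0, (∫ s : ℝ, h i s) = Real.sqrt π := by
    intro i hi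
    have : (∫ s : ℝ, h i s) = ∫ s : ℝ, Real.exp (-1 * s^2) := by
      simp [hh, Finset.ne_of_mem_erase hi, neg_one_mul]
    rw [this, integral_gaussian, div_one]
  rw [e0, Finset.prod_congr rfl erest, Finset.prod_const,
    Finset.card_erase_of_mem (Finset.mem_univ 0), Finset.card_univ, Fintype.card_fin]


lemma polar (p : ℕ) (hp : 2 ≤ p) (n : ℕ) (x : EuclideanSpace ℝ (Fin p)) :
    (∫ t : sphere (0 : EuclideanSpace ℝ (Fin p)) 1, (⟪x, (t : EuclideanSpace ℝ (Fin p))⟫)^n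
        ∂(volume : Measure (EuclideanSpace ℝ (Fin p))).toSphere)
      * (∫ r in Ioi (0:ℝ), r ^ (p-1) * (r ^ n * Real.exp (-r^2)))
    = ∫ y : EuclideanSpace ℝ (Fin p), ⟪x, y⟫ ^ n * Real.exp (-‖y‖^2) := by
  haveI : Nontrivial (EuclideanSpace ℝ (Fin p)) := by
    have h : 0 < Module.finrank ℝ (EuclideanSpace ℝ (Fin p)) := by
      simp only [finrank_euclideanSpace_fin]; omega
    exact Module.nontrivial_of_finrank_pos h
  have hdim : Module.finrank ℝ (EuclideanSpace ℝ (Fin p)) = p := finrank_euclideanSpace_fin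
  set g : EuclideanSpace ℝ (Fin p) → ℝ := fun y => ⟪x, y⟫ ^ n * Real.exp (-‖y‖^2) with hg
  set f : sphere (0:EuclideanSpace ℝ (Fin p)) 1 → ℝ := fun t =>
    ⟪x, (t:EuclideanSpace ℝ (Fin p))⟫ ^ n with hf
  set w : ℝ → ℝ := fun r => r ^ n * Real.exp (-r^2) with hwdef
  have step1 : ∫ y, g y ∂(volume : Measure (EuclideanSpace ℝ (Fin p)))
      = ∫ y : ({(0:EuclideanSpace ℝ (Fin p))}ᶜ : Set (EuclideanSpace ℝ (Fin p))), g y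
          ∂((volume : Measure (EuclideanSpace ℝ (Fin p))).comap Subtype.val) := by
    rw [integral_subtype_comap (measurableSet_singleton _).compl g, restrict_compl_singleton]
  have step2 : ∫ y : ({(0:EuclideanSpace ℝ (Fin p))}ᶜ : Set (EuclideanSpace ℝ (Fin p))), g y
        ∂((volume : Measure (EuclideanSpace ℝ (Fin p))).comap Subtype.val)
      = ∫ z : sphere (0:EuclideanSpace ℝ (Fin p)) 1 × Ioi (0:ℝ), f z.1 * w z.2
          ∂((volume : Measure (EuclideanSpace ℝ (Fin p))).toSphere.prod
            (Measure.volumeIoiPow (Module.finrank ℝ (EuclideanSpace ℝ (Fin p)) - 1))) := by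
    rw [← (volume : Measure (EuclideanSpace ℝ (Fin p))).measurePreserving_homeomorphUnitSphereProd.integral_comp
      (Homeomorph.measurableEmbedding _) (fun z => f z.1 * w z.2)]
    refine integral_congr_ae (Filter.Eventually.of_forall fun y => ?_)
    dsimp only [f, w, g]
    rw [homeomorphUnitSphereProd_apply_fst_coe, homeomorphUnitSphereProd_apply_snd_coe]
    have hy : ‖(y : EuclideanSpace ℝ (Fin p))‖ ≠ 0 := norm_ne_zero_iff.2 y.2
    rw [real_inner_smul_right, mul_pow]
    field_simp
    rw [mul_assoc, ← mul_pow, one_div_mul_cancel hy, one_pow, mul_one]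
  have step3 : ∫ z : sphere (0:EuclideanSpace ℝ (Fin p)) 1 × Ioi (0:ℝ), f z.1 * w z.2
        ∂((volume : Measure (EuclideanSpace ℝ (Fin p))).toSphere.prod
          (Measure.volumeIoiPow (Module.finrank ℝ (EuclideanSpace ℝ (Fin p)) - 1)))
      = (∫ t, f t ∂(volume : Measure (EuclideanSpace ℝ (Fin p))).toSphere)
        * ∫ r : Ioi (0:ℝ), w r
            ∂(Measure.volumeIoiPow (Module.finrank ℝ (EuclideanSpace ℝ (Fin p)) - 1)) :=
    integral_prod_mul f (fun r : Ioi (0:ℝ) => w r)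
  have step4 : ∫ r : Ioi (0:ℝ), w r
        ∂(Measure.volumeIoiPow (Module.finrank ℝ (EuclideanSpace ℝ (Fin p)) - 1))
      = ∫ r in Ioi (0:ℝ), r ^ (p-1) * w r := by
    simp only [Measure.volumeIoiPow, ENNReal.ofReal, hdim]
    rw [integral_withDensity_eq_integral_smul
      ((measurable_subtype_coe.pow_const _).real_toNNReal),
      integral_subtype_comap measurableSet_Ioi
        (fun a : ℝ => Real.toNNReal (a ^ (p-1)) • w a),
      setIntegral_congr_fun measurableSet_Ioi (fun r hr => ?_)]
    rw [NNReal.smul_def, Real.coe_toNNReal _ (pow_nonneg (le_of_lt hr) _), smul_eq_mul]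
  rw [← step4, ← step3, ← step2, ← step1]



lemma moment (p : ℕ) (hp : 2 ≤ p) (n : ℕ) (x : EuclideanSpace ℝ (Fin p)) :
    ∫ t : sphere (0 : EuclideanSpace ℝ (Fin p)) 1, (⟪x, (t : EuclideanSpace ℝ (Fin p))⟫)^n
        ∂(volume : Measure (EuclideanSpace ℝ (Fin p))).toSphere
    = ‖x‖^n * ((1 + (-1:ℝ)^n) * (Real.Gamma ((n+1)/2) / 2)) * (Real.sqrt π) ^ (p-1) * 2
        / Real.Gamma ((n+p)/2) := by
  haveI : NeZero p := ⟨by omega⟩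
  have hR : ∫ r in Ioi (0:ℝ), r ^ (p-1) * (r ^ n * Real.exp (-r^2))
      = Real.Gamma (((n:ℝ)+p)/2) / 2 := by
    have h1 : ∫ r in Ioi (0:ℝ), r ^ (p-1) * (r ^ n * Real.exp (-r^2))
        = ∫ r in Ioi (0:ℝ), r ^ (p-1+n) * Real.exp (-r^2) := by
      refine setIntegral_congr_fun measurableSet_Ioi (fun r hr => ?_)
      rw [pow_add]; ring
    rw [h1, radial (p-1+n)]
    congr 2
    have h2 : p - 1 + n + 1 = n + p := by omega
    rw [show ((p-1+n : ℕ):ℝ) + 1 = ((p-1+n+1 : ℕ):ℝ) by push_cast; ring, h2]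
    push_cast; ring
  -- unit vector
  obtain ⟨u, hu, hxy⟩ : ∃ u : EuclideanSpace ℝ (Fin p), ‖u‖ = 1 ∧
      ∀ y : EuclideanSpace ℝ (Fin p), ⟪x, y⟫ = ‖x‖ * ⟪u, y⟫ := by
    by_cases hx : x = 0
    · refine ⟨EuclideanSpace.single 0 1, by simp, fun y => by simp [hx]⟩
    · refine ⟨‖x‖⁻¹ • x, ?_, fun y => ?_⟩
      · rw [norm_smul, norm_inv, norm_norm, inv_mul_cancel₀ (norm_ne_zero_iff.2 hx)]
      · rw [real_inner_smul_left, ← mul_assoc,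
          mul_inv_cancel₀ (norm_ne_zero_iff.2 hx), one_mul]
  have hG : ∫ y : EuclideanSpace ℝ (Fin p), ⟪x, y⟫ ^ n * Real.exp (-‖y‖^2)
      = ‖x‖^n * ((1 + (-1:ℝ)^n) * (Real.Gamma ((n+1)/2) / 2)) * (Real.sqrt π) ^ (p-1) := by
    have h1 : ∫ y : EuclideanSpace ℝ (Fin p), ⟪x, y⟫ ^ n * Real.exp (-‖y‖^2)
        = ∫ y : EuclideanSpace ℝ (Fin p), ‖x‖^n * (⟪u, y⟫ ^ n * Real.exp (-‖y‖^2)) := by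
      refine integral_congr_ae (Filter.Eventually.of_forall fun y => ?_)
      dsimp only
      rw [hxy y, mul_pow]; ring
    rw [h1, integral_const_mul, gaussE p hp u hu n, gauss_moment n]; ring
  have hΓ : Real.Gamma (((n:ℝ)+p)/2) ≠ 0 :=
    ne_of_gt (Real.Gamma_pos_of_pos (by positivity))
  have key := polar p hp n x
  rw [hR, hG] at key
  field_simp at key ⊢
  linarith [key]

lemma moment_even (p : ℕ) (hp : 2 ≤ p) (j : ℕ) (x : EuclideanSpace ℝ (Fin p)) :
    ∫ t : sphere (0 : EuclideanSpace ℝ (Fin p)) 1, (⟪x, (t : EuclideanSpace ℝ (Fin p))⟫)^(2*j)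
        ∂(volume : Measure (EuclideanSpace ℝ (Fin p))).toSphere
    = 2 * π ^ (((p : ℝ) - 1) / 2) *
        (Real.Gamma ((j : ℝ) + 1 / 2) / Real.Gamma ((p : ℝ) / 2 + j)) * ‖x‖ ^ (2*j) := by
  rw [moment p hp (2*j) x]
  have h1 : (1 + (-1:ℝ)^(2*j)) = 2 := by
    rw [pow_mul, neg_one_sq, one_pow]; norm_num
  have h2 : ((2*j : ℕ):ℝ) = 2*j := by push_cast; ring
  have h3 : (Real.sqrt π) ^ (p-1) = π ^ (((p : ℝ) - 1) / 2) := by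
    rw [Real.sqrt_eq_rpow, ← Real.rpow_natCast (π ^ ((1:ℝ)/2)) (p-1),
      ← Real.rpow_mul pi_pos.le]
    congr 1
    rw [Nat.cast_sub (by omega)]
    push_cast; ring
  rw [h2, h1, h3]
  have h4 : ((2*(j:ℝ))+1)/2 = (j:ℝ) + 1/2 := by ring
  have h5 : ((2*(j:ℝ))+(p:ℝ))/2 = (p:ℝ)/2 + j := by ring
  rw [h4, h5]
  ring

lemma moment_odd (p : ℕ) (hp : 2 ≤ p) (n : ℕ) (hn : ¬ Even n) (x : EuclideanSpace ℝ (Fin p)) :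
    ∫ t : sphere (0 : EuclideanSpace ℝ (Fin p)) 1, (⟪x, (t : EuclideanSpace ℝ (Fin p))⟫)^n
        ∂(volume : Measure (EuclideanSpace ℝ (Fin p))).toSphere
    = 0 := by
  rw [moment p hp n x, (Nat.not_even_iff_odd.mp hn).neg_one_pow]
  ring

end auxiliary



theorem stmt9 (p : ℕ) (hp : 2 ≤ p) (k : ℕ) (c : ℂ) (x : EuclideanSpace ℝ (Fin p)) :
    (∫ t : sphere (0 : EuclideanSpace ℝ (Fin p)) 1,
        ((⟪x, (t : EuclideanSpace ℝ (Fin p))⟫ : ℂ) + c) ^ k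
        ∂(volume : Measure (EuclideanSpace ℝ (Fin p))).toSphere)
      = ∑ j ∈ Finset.range (k / 2 + 1),
          (k.choose (2 * j) : ℂ) *
            ((2 * Real.pi ^ (((p : ℝ) - 1) / 2) *
              (Real.Gamma ((j : ℝ) + 1 / 2) / Real.Gamma ((p : ℝ) / 2 + j)) : ℝ) : ℂ) *
            (‖x‖ : ℂ) ^ (2 * j) * c ^ (k - 2 * j) := by
  classical
  have hcont : ∀ i : ℕ, Continuous (fun t : sphere (0 : EuclideanSpace ℝ (Fin p)) 1 =>
      ((⟪x, (t : EuclideanSpace ℝ (Fin p))⟫ : ℂ)) ^ i * c ^ (k - i) * (k.choose i : ℂ)) := by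
    intro i
    apply Continuous.mul
    apply Continuous.mul
    · exact (Complex.continuous_ofReal.comp
        ((continuous_const.inner continuous_subtype_val))).pow i
    · exact continuous_const
    · exact continuous_const
  have hint : ∀ i ∈ Finset.range (k+1), Integrable (fun t : sphere (0 : EuclideanSpace ℝ (Fin p)) 1 =>
      ((⟪x, (t : EuclideanSpace ℝ (Fin p))⟫ : ℂ)) ^ i * c ^ (k - i) * (k.choose i : ℂ))
      ((volume : Measure (EuclideanSpace ℝ (Fin p))).toSphere) := by
    intro i _
    refine (hcont i).integrable_of_hasCompactSupport ?_
    exact IsCompact.of_isClosed_subset isCompact_univ (isClosed_tsupport _) (Set.subset_univ _)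
  have h1 : (∫ t : sphere (0 : EuclideanSpace ℝ (Fin p)) 1,
        ((⟪x, (t : EuclideanSpace ℝ (Fin p))⟫ : ℂ) + c) ^ k
        ∂(volume : Measure (EuclideanSpace ℝ (Fin p))).toSphere)
      = ∑ i ∈ Finset.range (k+1), ∫ t : sphere (0 : EuclideanSpace ℝ (Fin p)) 1,
          ((⟪x, (t : EuclideanSpace ℝ (Fin p))⟫ : ℂ)) ^ i * c ^ (k - i) * (k.choose i : ℂ)
          ∂(volume : Measure (EuclideanSpace ℝ (Fin p))).toSphere := by
    rw [← integral_finset_sum _ hint]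
    refine integral_congr_ae (Filter.Eventually.of_forall fun t => ?_)
    dsimp only
    rw [add_pow]
  rw [h1]
  have h2 : ∀ i ∈ Finset.range (k+1), (∫ t : sphere (0 : EuclideanSpace ℝ (Fin p)) 1,
        ((⟪x, (t : EuclideanSpace ℝ (Fin p))⟫ : ℂ)) ^ i * c ^ (k - i) * (k.choose i : ℂ)
        ∂(volume : Measure (EuclideanSpace ℝ (Fin p))).toSphere)
      = ((∫ t : sphere (0 : EuclideanSpace ℝ (Fin p)) 1,
          (⟪x, (t : EuclideanSpace ℝ (Fin p))⟫) ^ i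
          ∂(volume : Measure (EuclideanSpace ℝ (Fin p))).toSphere : ℝ) : ℂ)
        * c ^ (k - i) * (k.choose i : ℂ) := by
    intro i _
    rw [integral_mul_const, integral_mul_const]
    congr 1
    congr 1
    norm_cast
  rw [Finset.sum_congr rfl h2]
  -- drop odd terms
  have h3 : ∑ i ∈ Finset.range (k+1), ((∫ t : sphere (0 : EuclideanSpace ℝ (Fin p)) 1,
        (⟪x, (t : EuclideanSpace ℝ (Fin p))⟫) ^ i
        ∂(volume : Measure (EuclideanSpace ℝ (Fin p))).toSphere : ℝ) : ℂ)
        * c ^ (k - i) * (k.choose i : ℂ)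
      = ∑ i ∈ (Finset.range (k+1)).filter (fun i => Even i),
        ((∫ t : sphere (0 : EuclideanSpace ℝ (Fin p)) 1,
        (⟪x, (t : EuclideanSpace ℝ (Fin p))⟫) ^ i
        ∂(volume : Measure (EuclideanSpace ℝ (Fin p))).toSphere : ℝ) : ℂ)
        * c ^ (k - i) * (k.choose i : ℂ) := by
    refine (Finset.sum_filter_of_ne fun i hi hne => ?_).symm
    by_contra hodd
    rw [moment_odd p hp i hodd x] at hne
    simp at hne
  rw [h3]
  refine (Finset.sum_nbij' (fun i => i / 2) (fun j => 2 * j) ?_ ?_ ?_ ?_ ?_).symm.symm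
  · intro i hi
    simp only [Finset.mem_filter, Finset.mem_range] at hi
    simp only [Finset.mem_range]
    omega
  · intro j hj
    simp only [Finset.mem_range] at hj
    simp only [Finset.mem_filter, Finset.mem_range]
    constructor
    · omega
    · exact even_two_mul j
  · intro i hi
    simp only [Finset.mem_filter, Finset.mem_range] at hi
    obtain ⟨-, m, hm⟩ := hi
    omega
  · intro j hj
    omega
  · intro i hi
    simp only [Finset.mem_filter, Finset.mem_range] at hi
    obtain ⟨hik, hev⟩ := hi
    obtain ⟨m, rfl⟩ := hev
    have e1 : m + m = 2 * m := by ring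
    have e2 : (m + m) / 2 = m := by omega
    rw [e1, show 2*m/2 = m from by omega, moment_even p hp m x]
    push_cast
    ring
end
end

section
/- Let p ≥ 1 be a natural number. Set β_j = -j for j even and β_j = -(j + p - 1) for j odd, and define real sequences (c_j), (d_j) by c_0 = 1, d_0 = 0, c_{j+1} = (-1)^j d_j / β_{j+1}, d_{j+1} = -(-1)^j c_j / β_{j+1}. Then for every j ∈ ℕ: c_{2j} = Γ(p/2) / (4^j · j! · Γ(j + p/2)), c_{2j+1} = 0, d_{2j} = 0, and d_{2j+1} = Γ(p/2) / (2 · 4^j · j! · Γ(j + 1 + p/2)). -/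
noncomputable section

variable (p : ℕ) in
/-- `β_j = -j` for `j` even and `β_j = -(j + p - 1)` for `j` odd. -/
def βcoef (j : ℕ) : ℝ := if Even j then -(j : ℝ) else -((j : ℝ) + p - 1)

theorem stmt11 (p : ℕ) (hp : 1 ≤ p) (c d : ℕ → ℝ)
    (hc0 : c 0 = 1) (hd0 : d 0 = 0)
    (hc : ∀ j, c (j + 1) = (-1 : ℝ) ^ j * d j / βcoef p (j + 1))
    (hd : ∀ j, d (j + 1) = -((-1 : ℝ) ^ j * c j) / βcoef p (j + 1)) :
    ∀ j : ℕ,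
      c (2 * j) = Real.Gamma ((p : ℝ) / 2) /
          (4 ^ j * j.factorial * Real.Gamma ((j : ℝ) + p / 2)) ∧
      c (2 * j + 1) = 0 ∧
      d (2 * j) = 0 ∧
      d (2 * j + 1) = Real.Gamma ((p : ℝ) / 2) /
          (2 * 4 ^ j * j.factorial * Real.Gamma ((j : ℝ) + 1 + p / 2)) := by
  have hp0 : (0:ℝ) < p := by exact_mod_cast hp
  have hGpos : ∀ x : ℝ, 0 < x → Real.Gamma x ≠ 0 :=
    fun x hx => (Real.Gamma_pos_of_pos hx).ne'
  intro j
  induction j with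
  | zero =>
    have hβ1 : βcoef p 1 = -(p:ℝ) := by
      simp [βcoef]
    have hG : Real.Gamma ((p:ℝ)/2) ≠ 0 := hGpos _ (by linarith)
    refine ⟨?_, ?_, ?_, ?_⟩
    · rw [show 2*0 = 0 from rfl, hc0]
      push_cast
      rw [zero_add]
      field_simp
      simp
    · rw [show 2*0+1 = 0+1 from rfl, hc 0, hd0]
      simp
    · simpa using hd0
    · rw [show 2*0+1 = 0+1 from rfl, hd 0, hc0, hβ1]
      have hG1 : Real.Gamma ((0:ℝ) + 1 + p/2) = (p/2) * Real.Gamma ((p:ℝ)/2) := by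
        rw [show (0:ℝ) + 1 + p/2 = p/2 + 1 by ring, Real.Gamma_add_one (by positivity)]
      push_cast
      rw [hG1]
      field_simp
      simp
  | succ j ih =>
    obtain ⟨ihc, ihc1, ihd, ihd1⟩ := ih
    have hβe : βcoef p (2*(j+1)) = -((2*j:ℝ)+2) := by
      simp [βcoef, Nat.even_add_one, Nat.even_add, parity_simps]
      ring
    have hβo : βcoef p (2*(j+1)+1) = -((2*j:ℝ)+2+p) := by
      have h : ¬ Even (2*(j+1)+1) := by simp [Nat.even_add_one, parity_simps]
      simp only [βcoef, h, if_false]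
      push_cast; ring
    have hG : Real.Gamma ((j:ℝ) + 1 + p/2) ≠ 0 := hGpos _ (by positivity)
    have hfac : (j.factorial : ℝ) ≠ 0 := by exact_mod_cast j.factorial_ne_zero
    have h4 : (4:ℝ)^j ≠ 0 := by positivity
    -- c (2(j+1))
    have hc2 : c (2*(j+1)) = Real.Gamma ((p : ℝ) / 2) /
        (4 ^ (j+1) * (j+1).factorial * Real.Gamma (((j+1:ℕ) : ℝ) + p / 2)) := by
      have := hc (2*j+1)
      rw [show 2*j+1+1 = 2*(j+1) from by ring] at this
      have e1 : c (2*(j+1)) = d (2*j+1) / (2*(j:ℝ)+2) := by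
        rw [this, hβe, pow_succ, (by simp [parity_simps] : Even (2*j)).neg_one_pow]
        rw [one_mul, neg_one_mul, neg_div_neg_eq]
      rw [e1, ihd1, div_div]
      have hden : (4:ℝ)^(j+1) * ((j+1).factorial : ℝ)
          = 2 * 4^j * (j.factorial : ℝ) * (2*(j:ℝ)+2) := by
        rw [pow_succ, Nat.factorial_succ]
        push_cast
        ring
      rw [hden]
      push_cast
      ring
    have hfac' : ((j+1).factorial : ℝ) ≠ 0 := by exact_mod_cast (j+1).factorial_ne_zero
    have h4' : (4:ℝ)^(j+1) ≠ 0 := by positivity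
    refine ⟨hc2, ?_, ?_, ?_⟩
    · -- d(2j+2) = 0 then c(2j+3) = 0
      have hd2 : d (2*(j+1)) = 0 := by
        have := hd (2*j+1)
        rw [show 2*j+1+1 = 2*(j+1) from by ring] at this
        rw [this, ihc1]
        simp
      have := hc (2*(j+1))
      rw [this, hd2]
      simp
    · have := hd (2*j+1)
      rw [show 2*j+1+1 = 2*(j+1) from by ring] at this
      rw [this, ihc1]
      simp
    · have := hd (2*(j+1))
      have hG2 : Real.Gamma (((j+1:ℕ):ℝ) + 1 + p/2)
          = ((j:ℝ) + 1 + p/2) * Real.Gamma (((j+1:ℕ):ℝ) + p/2) := by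
        push_cast
        rw [show (j:ℝ)+1 + 1 + p/2 = ((j:ℝ)+1+p/2) + 1 by ring,
          Real.Gamma_add_one (by positivity)]
      have e2 : d (2*(j+1)+1) = c (2*(j+1)) / (2*(j:ℝ)+2+p) := by
        rw [this, hβo, (by simp [parity_simps] : Even (2*(j+1))).neg_one_pow]
        rw [one_mul, neg_div_neg_eq]
      rw [e2, hc2, div_div, hG2]
      push_cast
      ring
end
end
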